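/- arXiv:1109.2543 — 8 statements merged into one kernel-verified Lean document; each statement's English description precedes it below -/
import Mathlib

section
/- Let L ≥ 1 and K ≥ 2 be integers and let λ_c, λ_0, λ_1, …, λ_{K−1} ∈ ℝ^L. Set λ̄ = (1/K)·Σ_{j=0}^{K−1} λ_j. Then for every integer κ with 1 ≤ κ ≤ K, Σ_{S ⊆ {0,…,K−1}, |S| = κ} ‖λ_c − (1/κ)·Σ_{j∈S} λ_j‖² = C(K,κ)·[ ‖λ_c − λ̄‖² + ((K−κ)/(K·κ·(K−1)))·Σ_{i=0}^{K−1} ‖λ_i − λ̄‖² ], where C(K,κ) is the binomial coefficient and ‖·‖ is the Euclidean norm on ℝ^L. -/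
open RealInnerProductSpace

private lemma mdc_count1 {n κ : ℕ} (hκ : 1 ≤ κ) (j : Fin n) :
    ((Finset.univ.powersetCard κ).filter (fun S => j ∈ S)).card
      = (n - 1).choose (κ - 1) := by
  have hcard : (Finset.univ.erase j).card = n - 1 := by
    rw [Finset.card_erase_of_mem (Finset.mem_univ j), Finset.card_univ, Fintype.card_fin]
  rw [← hcard, ← Finset.card_powersetCard]
  apply Finset.card_bij' (fun S _ => S.erase j) (fun T _ => insert j T)
  case hi =>
    intro S hS
    simp only [Finset.mem_filter, Finset.mem_powersetCard_univ] at hS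
    rw [Finset.mem_powersetCard]
    constructor
    · intro x hx
      rw [Finset.mem_erase] at hx ⊢
      exact ⟨hx.1, Finset.mem_univ x⟩
    · rw [Finset.card_erase_of_mem hS.2, hS.1]
  case hj =>
    intro T hT
    rw [Finset.mem_powersetCard] at hT
    have hjT : j ∉ T := fun h => (Finset.mem_erase.mp (hT.1 h)).1 rfl
    simp only [Finset.mem_filter, Finset.mem_powersetCard_univ]
    refine ⟨?_, Finset.mem_insert_self j T⟩
    rw [Finset.card_insert_of_notMem hjT, hT.2]
    omega
  case left_inv =>
    intro S hS
    simp only [Finset.mem_filter] at hS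
    exact Finset.insert_erase hS.2
  case right_inv =>
    intro T hT
    rw [Finset.mem_powersetCard] at hT
    exact Finset.erase_insert (fun h => (Finset.mem_erase.mp (hT.1 h)).1 rfl)

private lemma mdc_count2 {n κ : ℕ} (hκ : 1 ≤ κ) (i j : Fin n) (hij : i ≠ j) :
    ((Finset.univ.powersetCard κ).filter (fun S => i ∈ S ∧ j ∉ S)).card
      = (n - 2).choose (κ - 1) := by
  have hij' : i ∈ Finset.univ.erase j := Finset.mem_erase.mpr ⟨hij, Finset.mem_univ i⟩
  have hcard : ((Finset.univ.erase j).erase i).card = n - 2 := by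
    rw [Finset.card_erase_of_mem hij', Finset.card_erase_of_mem (Finset.mem_univ j),
      Finset.card_univ, Fintype.card_fin]
    omega
  rw [← hcard, ← Finset.card_powersetCard]
  apply Finset.card_bij' (fun S _ => S.erase i) (fun T _ => insert i T)
  case hi =>
    intro S hS
    simp only [Finset.mem_filter, Finset.mem_powersetCard_univ] at hS
    rw [Finset.mem_powersetCard]
    constructor
    · intro x hx
      rw [Finset.mem_erase] at hx
      rw [Finset.mem_erase, Finset.mem_erase]
      exact ⟨hx.1, fun h => hS.2.2 (h ▸ hx.2), Finset.mem_univ x⟩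
    · rw [Finset.card_erase_of_mem hS.2.1, hS.1]
  case hj =>
    intro T hT
    rw [Finset.mem_powersetCard] at hT
    have hiT : i ∉ T := fun h => (Finset.mem_erase.mp (hT.1 h)).1 rfl
    have hjT : j ∉ T := fun h => (Finset.mem_erase.mp (Finset.mem_erase.mp (hT.1 h)).2).1 rfl
    simp only [Finset.mem_filter, Finset.mem_powersetCard_univ]
    refine ⟨?_, Finset.mem_insert_self i T, ?_⟩
    · rw [Finset.card_insert_of_notMem hiT, hT.2]; omega
    · rw [Finset.mem_insert]
      push_neg
      exact ⟨fun h => hij h.symm, hjT⟩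
  case left_inv =>
    intro S hS
    simp only [Finset.mem_filter] at hS
    exact Finset.insert_erase hS.2.1
  case right_inv =>
    intro T hT
    rw [Finset.mem_powersetCard] at hT
    exact Finset.erase_insert (fun h => (Finset.mem_erase.mp (hT.1 h)).1 rfl)

private lemma mdc_swap1 {α M : Type*} [DecidableEq α] [Fintype α] [AddCommMonoid M]
    (P : Finset (Finset α)) (f : α → M) :
    ∑ S ∈ P, ∑ j ∈ S, f j
      = ∑ j, (P.filter (fun S => j ∈ S)).card • f j := by
  have h1 : ∀ S ∈ P, ∑ j ∈ S, f j = ∑ j, if j ∈ S then f j else 0 := by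
    intro S _
    rw [Finset.sum_ite_mem, Finset.univ_inter]
  rw [Finset.sum_congr rfl h1, Finset.sum_comm]
  refine Finset.sum_congr rfl fun j _ => ?_
  rw [← Finset.sum_filter, Finset.sum_const]

private lemma mdc_swap2 {α : Type*} [DecidableEq α] [Fintype α]
    (P : Finset (Finset α)) (g : α → α → ℝ) :
    ∑ S ∈ P, ∑ i ∈ S, ∑ j ∈ Finset.univ \ S, g i j
      = ∑ i, ∑ j, ((P.filter (fun S => i ∈ S ∧ j ∉ S)).card : ℝ) * g i j := by
  have h1 : ∀ S ∈ P, ∑ i ∈ S, ∑ j ∈ Finset.univ \ S, g i j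
      = ∑ i, ∑ j, if i ∈ S ∧ j ∉ S then g i j else 0 := by
    intro S _
    have inner : ∀ i, ∑ j ∈ Finset.univ \ S, g i j = ∑ j, if j ∉ S then g i j else 0 := by
      intro i
      rw [← Finset.sum_filter]
      congr 1
      ext x
      simp [Finset.mem_sdiff]
    have outer : ∑ i ∈ S, ∑ j ∈ Finset.univ \ S, g i j
        = ∑ i, if i ∈ S then ∑ j ∈ Finset.univ \ S, g i j else 0 := by
      rw [Finset.sum_ite_mem, Finset.univ_inter]
    rw [outer]
    refine Finset.sum_congr rfl fun i _ => ?_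
    by_cases hi : i ∈ S
    · simp only [hi, if_true, true_and]
      rw [inner i]
    · simp [hi]
  rw [Finset.sum_congr rfl h1, Finset.sum_comm]
  refine Finset.sum_congr rfl fun i _ => ?_
  rw [Finset.sum_comm]
  refine Finset.sum_congr rfl fun j _ => ?_
  rw [← Finset.sum_filter, Finset.sum_const, nsmul_eq_mul]

/-- Decomposition of the total multiple-description labeling cost:
for `λ_c, λ_0, …, λ_{K-1} ∈ ℝ^L` with centroid `λ̄ = (1/K)·Σ_j λ_j` and any
`1 ≤ κ ≤ K`, the sum over all `κ`-element subsets `S` of `{0,…,K-1}` of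
`‖λ_c − (1/κ)·Σ_{j∈S} λ_j‖²` equals
`C(K,κ)·(‖λ_c − λ̄‖² + ((K−κ)/(K·κ·(K−1)))·Σ_i ‖λ_i − λ̄‖²)`. -/
theorem mdc_cost_decomposition
    (L K : ℕ) (hL : 1 ≤ L) (hK : 2 ≤ K)
    (lamc : EuclideanSpace ℝ (Fin L)) (lam : Fin K → EuclideanSpace ℝ (Fin L))
    (lbar : EuclideanSpace ℝ (Fin L))
    (hbar : lbar = (1 / (K : ℝ)) • ∑ j, lam j)
    (κ : ℕ) (hκ1 : 1 ≤ κ) (hκK : κ ≤ K) :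
    ∑ S ∈ Finset.univ.powersetCard κ,
        ‖lamc - (1 / (κ : ℝ)) • ∑ j ∈ S, lam j‖ ^ 2
      = (K.choose κ : ℝ) *
        (‖lamc - lbar‖ ^ 2
          + ((K - κ : ℝ) / ((K : ℝ) * κ * (K - 1))) * ∑ i, ‖lam i - lbar‖ ^ 2) := by
  classical
  have hK0 : (K : ℝ) ≠ 0 := by
    have : 0 < K := by omega
    exact_mod_cast this.ne'
  have hκ0 : (κ : ℝ) ≠ 0 := by
    have : 0 < κ := by omega
    exact_mod_cast this.ne'
  have hK1 : (K : ℝ) - 1 ≠ 0 := by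
    have : (2 : ℝ) ≤ (K : ℝ) := by exact_mod_cast hK
    linarith
  set P : Finset (Finset (Fin K)) := Finset.univ.powersetCard κ with hP
  set a : EuclideanSpace ℝ (Fin L) := lamc - lbar with ha
  set μ : Fin K → EuclideanSpace ℝ (Fin L) := fun i => lam i - lbar with hμdef
  have hμsum : ∑ i, μ i = 0 := by
    simp only [hμdef]
    rw [Finset.sum_sub_distrib, Finset.sum_const, Finset.card_univ, Fintype.card_fin, hbar,
      ← Nat.cast_smul_eq_nsmul ℝ, smul_smul]
    rw [mul_one_div, div_self hK0, one_smul, sub_self]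
  -- pointwise rewriting of each summand
  have hpoint : ∀ S ∈ P,
      ‖lamc - (1 / (κ : ℝ)) • ∑ j ∈ S, lam j‖ ^ 2
        = ‖a‖ ^ 2 - 2 * ((1 / (κ : ℝ)) * ⟪a, ∑ j ∈ S, μ j⟫)
            + (1 / (κ : ℝ))^2 * ‖∑ j ∈ S, μ j‖ ^ 2 := by
    intro S hS
    have hScard : S.card = κ := (Finset.mem_powersetCard_univ.mp hS)
    have hsplit : lamc - (1 / (κ : ℝ)) • ∑ j ∈ S, lam j
        = a - (1 / (κ : ℝ)) • ∑ j ∈ S, μ j := by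
      have h1 : ∑ j ∈ S, lam j = (∑ j ∈ S, μ j) + (κ : ℝ) • lbar := by
        simp only [hμdef]
        rw [Finset.sum_sub_distrib, Finset.sum_const, hScard,
          ← Nat.cast_smul_eq_nsmul ℝ]
        abel
      rw [h1, smul_add, smul_smul, one_div_mul_cancel hκ0, one_smul, ha]
      abel
    rw [hsplit, norm_sub_sq_real, real_inner_smul_right, norm_smul]
    have : ‖(1 / (κ : ℝ))‖ = 1 / (κ : ℝ) := by
      rw [Real.norm_eq_abs, abs_of_pos]
      positivity
    rw [this, mul_pow]
  rw [Finset.sum_congr rfl hpoint]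
  rw [Finset.sum_add_distrib, Finset.sum_sub_distrib, Finset.sum_const, ← Finset.mul_sum,
    ← Finset.mul_sum, ← Finset.mul_sum]
  have hPcard : P.card = K.choose κ := by
    rw [hP, Finset.card_powersetCard, Finset.card_univ, Fintype.card_fin]
  -- the cross term vanishes
  have hT2 : ∑ S ∈ P, ⟪a, ∑ j ∈ S, μ j⟫ = 0 := by
    have : ∑ S ∈ P, ⟪a, ∑ j ∈ S, μ j⟫ = ⟪a, ∑ S ∈ P, ∑ j ∈ S, μ j⟫ := by
      rw [inner_sum]
    rw [this, mdc_swap1]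
    have : ∀ j : Fin K, (P.filter (fun S => j ∈ S)).card • μ j
        = ((K-1).choose (κ-1)) • μ j := by
      intro j
      rw [hP, mdc_count1 hκ1]
    rw [Finset.sum_congr rfl (fun j _ => this j), ← Finset.smul_sum, hμsum, smul_zero,
      inner_zero_right]
  -- the quadratic term
  have hgsum : ∑ i, ∑ j, ⟪μ i, μ j⟫ = 0 := by
    have : ∀ i : Fin K, ∑ j, ⟪μ i, μ j⟫ = 0 := by
      intro i
      rw [← inner_sum, hμsum, inner_zero_right]
    exact Finset.sum_eq_zero fun i _ => this i
  have hT3 : ∑ S ∈ P, ‖∑ j ∈ S, μ j‖ ^ 2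
      = ((K-2).choose (κ-1) : ℝ) * ∑ i, ‖μ i‖ ^ 2 := by
    have hkey : ∀ S ∈ P, ‖∑ j ∈ S, μ j‖ ^ 2
        = -∑ i ∈ S, ∑ j ∈ Finset.univ \ S, ⟪μ i, μ j⟫ := by
      intro S _
      have h0 : ∑ j ∈ Finset.univ \ S, μ j = -∑ j ∈ S, μ j := by
        have h := Finset.sum_sdiff (Finset.subset_univ S) (f := μ)
        rw [hμsum] at h
        exact eq_neg_of_add_eq_zero_left h
      calc ‖∑ j ∈ S, μ j‖ ^ 2
          = ⟪∑ j ∈ S, μ j, ∑ j ∈ S, μ j⟫ := (real_inner_self_eq_norm_sq _).symm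
        _ = -⟪∑ i ∈ S, μ i, ∑ j ∈ Finset.univ \ S, μ j⟫ := by
            rw [h0, inner_neg_right, neg_neg]
        _ = -∑ i ∈ S, ∑ j ∈ Finset.univ \ S, ⟪μ i, μ j⟫ := by
            congr 1
            rw [sum_inner]
            exact Finset.sum_congr rfl fun i _ => inner_sum _ _ _
    rw [Finset.sum_congr rfl hkey, Finset.sum_neg_distrib, mdc_swap2]
    have hc : ∀ i j : Fin K, ((P.filter (fun S => i ∈ S ∧ j ∉ S)).card : ℝ)
        = if i = j then 0 else (((K-2).choose (κ-1) : ℕ) : ℝ) := by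
      intro i j
      by_cases h : i = j
      · subst h
        rw [if_pos rfl, Finset.filter_false_of_mem (fun S _ => by tauto), Finset.card_empty,
          Nat.cast_zero]
      · rw [if_neg h, hP, mdc_count2 hκ1 i j h]
    have hrow : ∀ i : Fin K,
        ∑ j, ((P.filter (fun S => i ∈ S ∧ j ∉ S)).card : ℝ) * ⟪μ i, μ j⟫
          = (((K-2).choose (κ-1) : ℕ) : ℝ) * (∑ j, ⟪μ i, μ j⟫)
            - (((K-2).choose (κ-1) : ℕ) : ℝ) * ⟪μ i, μ i⟫ := by
      intro i
      have : ∀ j : Fin K, ((P.filter (fun S => i ∈ S ∧ j ∉ S)).card : ℝ) * ⟪μ i, μ j⟫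
          = (((K-2).choose (κ-1) : ℕ) : ℝ) * ⟪μ i, μ j⟫
            - (if j = i then (((K-2).choose (κ-1) : ℕ) : ℝ) * ⟪μ i, μ j⟫ else 0) := by
        intro j
        rw [hc i j]
        by_cases h : i = j
        · subst h; simp
        · rw [if_neg h, if_neg (Ne.symm h)]; ring
      rw [Finset.sum_congr rfl (fun j _ => this j), Finset.sum_sub_distrib, ← Finset.mul_sum,
        Finset.sum_ite_eq' Finset.univ i, if_pos (Finset.mem_univ i)]
    rw [Finset.sum_congr rfl (fun i _ => hrow i), Finset.sum_sub_distrib, ← Finset.mul_sum,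
      ← Finset.mul_sum, hgsum, mul_zero, zero_sub, neg_neg]
    congr 1
    exact Finset.sum_congr rfl fun i _ => real_inner_self_eq_norm_sq (μ i)
  -- arithmetic identity between binomial coefficients
  have hnat : (K-2).choose (κ-1) * (K*(K-1)) = K.choose κ * (K-κ) * κ := by
    have eK : K - 1 + 1 = K := by omega
    have eK2 : K - 2 + 1 = K - 1 := by omega
    have eκ : κ - 1 + 1 = κ := by omega
    have h1 : (K-1).choose κ * K = K.choose κ * (K - κ) := by
      have h := Nat.choose_mul_succ_eq (K-1) κ
      rw [eK] at h
      exact h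
    have h2 : (K-1) * (K-2).choose (κ-1) = (K-1).choose κ * κ := by
      have h := Nat.add_one_mul_choose_eq (K-2) (κ-1)
      simp only [Nat.succ_eq_add_one, eK2, eκ] at h
      exact h
    calc (K-2).choose (κ-1) * (K*(K-1))
        = ((K-1) * (K-2).choose (κ-1)) * K := by ring
      _ = ((K-1).choose κ * κ) * K := by rw [h2]
      _ = ((K-1).choose κ * K) * κ := by ring
      _ = K.choose κ * (K-κ) * κ := by rw [h1]
  have hcoef : (((K-2).choose (κ-1) : ℕ) : ℝ) * ((K:ℝ) * ((K:ℝ)-1))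
      = (K.choose κ : ℝ) * ((K:ℝ) - (κ:ℝ)) * (κ:ℝ) := by
    have h := congrArg (Nat.cast (R := ℝ)) hnat
    push_cast [Nat.cast_sub hκK, Nat.cast_sub (show 1 ≤ K by omega)] at h
    linarith [h]
  -- put everything together
  have hMM : ∑ i, ‖lam i - lbar‖ ^ 2 = ∑ i, ‖μ i‖ ^ 2 := rfl
  rw [hT2, hT3, hPcard, nsmul_eq_mul, hMM]
  rw [mul_zero, mul_zero, sub_zero]
  have key : (1 / (κ:ℝ))^2 * (((K-2).choose (κ-1) : ℕ) : ℝ)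
      = (K.choose κ : ℝ) * (((K:ℝ) - (κ:ℝ)) / ((K:ℝ) * (κ:ℝ) * ((K:ℝ)-1))) := by
    field_simp
    linear_combination hcoef
  linear_combination (∑ i, ‖μ i‖ ^ 2) * key
end

section
/- Fix an integer K ≥ 2 and a real ζ > 0, and let s ∈ ℝ^K have components s_j = (2j−K+1)/(2K). For X = (x_0,…,x_{K−1}) ∈ ℤ^K and z ∈ ℤ, define X̌ = (x̌_0,…,x̌_{K−1}) by x̌_j = x_{(z+j) mod K} − ⌊(z+j)/K⌋ for j = 0,…,K−1. Then: (i) Σ_{i=0}^{K−1} (Kζ·x_i + (2i−K+1)ζ/2 − ζ·z)² = K²ζ²·‖X̌ + s‖², and (ii) the centroid condition (1/K)·Σ_{i=0}^{K−1} (Kζ·x_i + (2i−K+1)ζ/2) = ζ·z holds if and only if Σ_{j=0}^{K−1} x̌_j = 0. -/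
open Fin.CommRing

/-- SSD cost about the reference point `ζ·z`: with
`x̌_j = x_{(z+j) mod K} − ⌊(z+j)/K⌋`, one has
`Σ_i (Kζ·x_i + (2i−K+1)ζ/2 − ζz)² = K²ζ²·‖X̌ + s‖²`, and the centroid condition
`(1/K)·Σ_i (Kζ·x_i + (2i−K+1)ζ/2) = ζ·z` holds iff `Σ_j x̌_j = 0`.
(Here the integer cast `((z + j : ℤ) : Fin K)` is reduction mod `K`, and `/` on `ℤ`
is floor division since `K > 0`.) -/
theorem ssd_cost_about_reference_point
    (K : ℕ) (hK : 2 ≤ K) [NeZero K] (ζ : ℝ) (hζ : 0 < ζ)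
    (s : EuclideanSpace ℝ (Fin K))
    (hs : ∀ j : Fin K, s j = (2 * (j : ℝ) - K + 1) / (2 * K))
    (X : Fin K → ℤ) (z : ℤ)
    (Xc : Fin K → ℤ)
    (hXc : ∀ j : Fin K, Xc j = X (((z + (j : ℤ)) : ℤ) : Fin K) - (z + (j : ℤ)) / K)
    (XcR : EuclideanSpace ℝ (Fin K))
    (hXcR : ∀ j : Fin K, XcR j = (Xc j : ℝ)) :
    (∑ i : Fin K, ((K : ℝ) * ζ * (X i : ℝ) + (2 * (i : ℝ) - K + 1) * ζ / 2 - ζ * z) ^ 2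
        = (K : ℝ) ^ 2 * ζ ^ 2 * ‖XcR + s‖ ^ 2) ∧
    ((1 / (K : ℝ)) * ∑ i : Fin K,
          ((K : ℝ) * ζ * (X i : ℝ) + (2 * (i : ℝ) - K + 1) * ζ / 2) = ζ * z
        ↔ ∑ j : Fin K, Xc j = 0) := by
  have hKZ : (0 : ℤ) < (K : ℤ) := by exact_mod_cast (Nat.pos_of_ne_zero (NeZero.ne K))
  have hKR : (0 : ℝ) < (K : ℝ) := by exact_mod_cast (Nat.pos_of_ne_zero (NeZero.ne K))
  -- cast lemma: Fin K behaves like ZMod K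
  have hcast : ∀ a : ℤ, (((a : Fin K) : ℕ) : ℤ) = a % K := by
    intro a
    have h : ((a : ZMod K).val : ℤ) = a % K := ZMod.val_intCast a
    obtain ⟨n, rfl⟩ := Nat.exists_eq_succ_of_ne_zero (NeZero.ne K)
    exact h
  set σ : Fin K → Fin K := fun j => (((z + (j : ℤ)) : ℤ) : Fin K) with hσ
  have hσbij : Function.Bijective σ := by
    refine Finite.injective_iff_bijective.mp ?_
    intro j1 j2 h
    have h1 : (z + (j1 : ℤ)) % K = (z + (j2 : ℤ)) % K := by
      rw [← hcast (z + (j1 : ℤ)), ← hcast (z + (j2 : ℤ))]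
      exact congrArg (fun i : Fin K => ((i : ℕ) : ℤ)) h
    have h2 : (j1 : ℤ) % K = (j2 : ℤ) % K := Int.ModEq.add_left_cancel' z h1
    have l1 : (j1 : ℤ) % K = (j1 : ℤ) :=
      Int.emod_eq_of_lt (by positivity) (by exact_mod_cast j1.isLt)
    have l2 : (j2 : ℤ) % K = (j2 : ℤ) :=
      Int.emod_eq_of_lt (by positivity) (by exact_mod_cast j2.isLt)
    have : (j1 : ℤ) = (j2 : ℤ) := by rw [← l1, ← l2, h2]
    exact Fin.ext (by exact_mod_cast this)
  have hsumσ : ∀ F : Fin K → ℝ, ∑ i : Fin K, F i = ∑ j : Fin K, F (σ j) := fun F =>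
    (Fintype.sum_bijective σ hσbij (F ∘ σ) F fun _ => rfl).symm
  -- key pointwise identity
  have key : ∀ j : Fin K,
      (K : ℝ) * ζ * (X (σ j) : ℝ) + (2 * ((σ j) : ℝ) - K + 1) * ζ / 2 - ζ * z
        = (K : ℝ) * ζ * ((Xc j : ℝ) + s j) := by
    intro j
    have hdm : (K : ℤ) * ((z + (j : ℤ)) / K) + (z + (j : ℤ)) % K = z + (j : ℤ) :=
      Int.mul_ediv_add_emod _ _
    have h1 : (((σ j) : ℕ) : ℤ) = (z + (j : ℤ)) % K := hcast _
    have hiZ : (((σ j) : ℕ) : ℤ) = z + (j : ℤ) - K * ((z + (j : ℤ)) / K) := by omega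
    have hiR : (((σ j) : ℕ) : ℝ) = (z : ℝ) + (j : ℝ) - K * (((z + (j : ℤ)) / K : ℤ) : ℝ) := by
      exact_mod_cast congrArg (fun a : ℤ => (a : ℝ)) hiZ
    rw [hXc j, hs j]
    rw [show X (((z + (j : ℤ)) : ℤ) : Fin K) = X (σ j) from rfl]
    push_cast
    rw [hiR]
    field_simp
    ring
  have hnormsq : ‖XcR + s‖ ^ 2 = ∑ j : Fin K, ((Xc j : ℝ) + s j) ^ 2 := by
    rw [EuclideanSpace.norm_eq, Real.sq_sqrt (by positivity)]
    refine Finset.sum_congr rfl fun j _ => ?_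
    simp [hXcR j, Real.norm_eq_abs, sq_abs]
  -- sum of s is zero
  have hsum : ∑ j : Fin K, (j : ℝ) = ((K : ℝ) * K - K) / 2 := by
    have h2 := Finset.sum_range_id_mul_two K
    have h3 := congrArg (Nat.cast (R := ℝ)) h2
    push_cast [Nat.cast_sub (by omega : 1 ≤ K)] at h3
    rw [Fin.sum_univ_eq_sum_range]
    linear_combination h3 / 2
  have hnum : ∑ j : Fin K, (2 * (j : ℝ) - K + 1) = 0 := by
    have : ∑ j : Fin K, (2 * (j : ℝ) - K + 1)
        = 2 * (∑ j : Fin K, (j : ℝ)) - K * K + K := by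
      rw [Finset.sum_add_distrib, Finset.sum_sub_distrib, ← Finset.mul_sum]
      simp [Finset.card_univ]
    rw [this, hsum]
    ring
  have hssum : ∑ j : Fin K, s j = 0 := by
    calc ∑ j : Fin K, s j = (∑ j : Fin K, (2 * (j : ℝ) - K + 1)) / (2 * K) := by
          rw [Finset.sum_div]; exact Finset.sum_congr rfl fun j _ => hs j
      _ = 0 := by rw [hnum, zero_div]
  constructor
  · calc ∑ i : Fin K, ((K : ℝ) * ζ * (X i : ℝ) + (2 * (i : ℝ) - K + 1) * ζ / 2 - ζ * z) ^ 2
        = ∑ j : Fin K,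
            ((K : ℝ) * ζ * (X (σ j) : ℝ) + (2 * ((σ j) : ℝ) - K + 1) * ζ / 2 - ζ * z) ^ 2 :=
          hsumσ _
      _ = ∑ j : Fin K, ((K : ℝ) * ζ * ((Xc j : ℝ) + s j)) ^ 2 :=
          Finset.sum_congr rfl fun j _ => by rw [key j]
      _ = (K : ℝ) ^ 2 * ζ ^ 2 * ∑ j : Fin K, ((Xc j : ℝ) + s j) ^ 2 := by
          rw [Finset.mul_sum]; exact Finset.sum_congr rfl fun j _ => by ring
      _ = (K : ℝ) ^ 2 * ζ ^ 2 * ‖XcR + s‖ ^ 2 := by rw [hnormsq]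
  · have hsum2 : ∑ i : Fin K, ((K : ℝ) * ζ * (X i : ℝ) + (2 * (i : ℝ) - K + 1) * ζ / 2)
        = (K : ℝ) * ζ * ((∑ j : Fin K, Xc j : ℤ) : ℝ) + K * (ζ * z) := by
      have e1 : ∑ i : Fin K, ((K : ℝ) * ζ * (X i : ℝ) + (2 * (i : ℝ) - K + 1) * ζ / 2 - ζ * z)
          = ∑ j : Fin K, (K : ℝ) * ζ * ((Xc j : ℝ) + s j) := by
        rw [hsumσ fun i => (K : ℝ) * ζ * (X i : ℝ) + (2 * (i : ℝ) - K + 1) * ζ / 2 - ζ * z]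
        exact Finset.sum_congr rfl fun j _ => key j
      have e2 : ∑ j : Fin K, (K : ℝ) * ζ * ((Xc j : ℝ) + s j)
          = (K : ℝ) * ζ * ((∑ j : Fin K, Xc j : ℤ) : ℝ) := by
        rw [← Finset.mul_sum, Finset.sum_add_distrib, hssum, add_zero]
        push_cast
        ring
      have e3 : ∑ i : Fin K, ((K : ℝ) * ζ * (X i : ℝ) + (2 * (i : ℝ) - K + 1) * ζ / 2 - ζ * z)
          = (∑ i : Fin K, ((K : ℝ) * ζ * (X i : ℝ) + (2 * (i : ℝ) - K + 1) * ζ / 2))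
            - K * (ζ * z) := by
        rw [Finset.sum_sub_distrib]
        simp [Finset.card_univ, mul_comm]
      rw [e3, e2] at e1
      linarith [e1]
    set C : ℝ := ((∑ j : Fin K, Xc j : ℤ) : ℝ) with hC
    rw [hsum2]
    have hKζ : (K : ℝ) * ζ ≠ 0 := by positivity
    constructor
    · intro h
      have h2 : (K : ℝ) * ζ * C + (K : ℝ) * (ζ * z) = (K : ℝ) * (ζ * z) := by
        calc (K : ℝ) * ζ * C + (K : ℝ) * (ζ * z)
            = (K : ℝ) * ((1 / (K : ℝ)) * ((K : ℝ) * ζ * C + (K : ℝ) * (ζ * z))) := by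
              field_simp
          _ = (K : ℝ) * (ζ * z) := by rw [h]
      have h3 : (K : ℝ) * ζ * C = 0 := by linarith
      have h4 : C = 0 := (mul_eq_zero.mp h3).resolve_left hKζ
      have h5 : ((∑ j : Fin K, Xc j : ℤ) : ℝ) = 0 := by rw [← hC]; exact h4
      exact_mod_cast h5
    · intro h
      have hC0 : C = 0 := by rw [hC, h, Int.cast_zero]
      rw [hC0]
      field_simp
      ring
end

section
/- Fix an integer K ≥ 2, a real ζ > 0, and a positive integer M. Let Λ = {X ∈ ℤ^K : Σ_{i=0}^{K−1} x_i = 0} and let β : V_r(0) → Λ be injective, where each X ∈ Λ is identified with the centroid-0 K-tuple (λ_0(X),…,λ_{K−1}(X)), λ_i(X) = Kζ·x_i + (2i−K+1)ζ/2. Extend β to a labeling α of the whole central quantizer A_c as follows: every λ ∈ A_c can be written uniquely as λ = λ_c + mζ with λ_c ∈ V_r(0) and m ∈ ℤ, and α(λ) is the K-tuple whose component in side quantizer A_{(m+i) mod K} is the point λ_i(β(λ_c)) + mζ, for i = 0,…,K−1. Then α : A_c → A_0 × A_1 × ⋯ × A_{K−1} is injective. -/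
open Fin.CommRing in
/-- Injectivity of the extended labeling: an injective assignment `β` of the
central points in `V_r(0)` to centroid-0 coordinate vectors (points of `A_{K−1}`),
extended to all of `A_c` by the rule that the component of `α(λ_c + mζ)` in side
quantizer `A_{(m+i) mod K}` is `λ_i(β(λ_c)) + mζ`, yields an injective labeling
`α : A_c → A_0 × ⋯ × A_{K−1}` (here `α v j ∈ A_j` for all `v ∈ A_c`). -/
theorem extended_labeling_injective
    (K : ℕ) (hK : 2 ≤ K) [NeZero K] (ζ : ℝ) (hζ : 0 < ζ) (M : ℕ) (hM : 0 < M)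
    (Ac Vr0 : Set ℝ)
    (hAc : Ac = {v : ℝ | ∃ y : ℤ,
        v = (ζ / M) * (y : ℝ) + (ζ / (2 * M)) * (((M + 1) % 2 : ℕ) : ℝ)})
    (hVr0 : Vr0 = Ac ∩ Set.Ioo (-(ζ / 2)) (ζ / 2))
    (β : ℝ → (Fin K → ℤ))
    (hβ0 : ∀ v ∈ Vr0, ∑ i : Fin K, β v i = 0)
    (hβinj : Set.InjOn β Vr0)
    (α : ℝ → (Fin K → ℝ))
    (hα : ∀ v ∈ Vr0, ∀ m : ℤ, ∀ i : Fin K,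
      α (v + (m : ℝ) * ζ) (((m + (i : ℤ)) : ℤ) : Fin K)
        = ((K : ℝ) * ζ * (β v i : ℝ) + (2 * (i : ℝ) - K + 1) * ζ / 2) + (m : ℝ) * ζ) :
    (∀ v ∈ Ac, ∀ j : Fin K, ∃ x : ℤ,
        α v j = (K : ℝ) * ζ * (x : ℝ) + (2 * (j : ℝ) - K + 1) * ζ / 2) ∧
    Set.InjOn α Ac := by
  have hζ' : (ζ:ℝ) ≠ 0 := ne_of_gt hζ
  have hM' : (M:ℝ) ≠ 0 := by positivity
  have hK0 : (0:ℝ) < K := by exact_mod_cast lt_of_lt_of_le (by norm_num) hK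
  -- translation invariance of Ac
  have hAcmem : ∀ v ∈ Ac, ∀ m : ℤ, v - (m:ℝ)*ζ ∈ Ac := by
    intro v hv m
    rw [hAc] at hv ⊢
    obtain ⟨y, hy⟩ := hv
    refine ⟨y - m*M, ?_⟩
    rw [hy]; push_cast; field_simp; ring
  -- decomposition: every point of Ac is a Vr0 point plus a multiple of ζ
  have hdec : ∀ v ∈ Ac, ∃ m : ℤ, v - (m:ℝ)*ζ ∈ Vr0 := by
    intro v hv
    refine ⟨⌊v/ζ + 1/2⌋, ?_⟩
    rw [hVr0]
    set m : ℤ := ⌊v/ζ + 1/2⌋ with hm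
    have hvζ : v/ζ*ζ = v := div_mul_cancel₀ v hζ'
    have h1 : (m:ℝ) ≤ v/ζ + 1/2 := Int.floor_le _
    have h2 : v/ζ + 1/2 < m + 1 := Int.lt_floor_add_one _
    refine ⟨hAcmem v hv m, ?_, ?_⟩
    · -- strict lower bound
      rcases lt_or_eq_of_le (show -(ζ/2) ≤ v - m*ζ by nlinarith) with h | h
      · exact h
      · exfalso
        rw [hAc] at hv
        obtain ⟨y, hy⟩ := hv
        set ε : ℕ := (M + 1) % 2 with hεdef
        have heq : ζ/M*(y:ℝ) + ζ/(2*M)*(ε:ℝ) - m*ζ = -(ζ/2) := by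
          rw [← hy]; linarith
        field_simp at heq
        have h2' : (2*(M:ℝ)*ζ) * (2*(y:ℝ) + (ε:ℝ))
            = (2*(M:ℝ)*ζ) * (2*((m:ℝ)*M) - M) := by linear_combination (2*(M:ℝ)*ζ) * heq
        have key : 2*(y:ℝ) + (ε:ℝ) = 2*((m:ℝ)*M) - M :=
          mul_left_cancel₀ (by positivity) h2'
        have keyZ : 2*y + (ε:ℤ) = 2*(m*M) - M := by exact_mod_cast key
        generalize hn : m*M = n at keyZ
        omega
    · nlinarith
  -- index lemma
  have hidx : ∀ (m : ℤ) (j : Fin K), ∃ i : Fin K, ∃ q : ℤ,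
      (((m + (i : ℤ)) : ℤ) : Fin K) = j ∧ m + (i:ℤ) = (j:ℤ) + K*q := by
    intro m j
    refine ⟨((((j:ℤ) - m : ℤ) : Fin K)), ?_⟩
    have h1 : ((m + ((((j:ℤ) - m : ℤ) : Fin K) : ℤ) : ℤ) : Fin K) = j := by
      push_cast [Fin.cast_val_eq_self]
      ring_nf
    set i : Fin K := (((j:ℤ) - m : ℤ) : Fin K) with hi
    have h0 : ((m + (i:ℤ) - (j:ℤ) : ℤ) : Fin K) = 0 := by
      push_cast
      rw [sub_eq_zero]
      calc ((m:ℤ) : Fin K) + i = ((m + (i:ℤ) : ℤ) : Fin K) := by simp [Fin.cast_val_eq_self]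
        _ = j := h1
    obtain ⟨q, hq⟩ := (CharP.intCast_eq_zero_iff (Fin K) K _).mp h0
    exact ⟨q, h1, by linarith⟩
  constructor
  · -- part 1
    intro v hv j
    obtain ⟨m, hw⟩ := hdec v hv
    obtain ⟨i, q, hij, hq⟩ := hidx m j
    have h := hα (v - m*ζ) hw m i
    rw [hij, show v - (m:ℝ)*ζ + (m:ℝ)*ζ = v by ring] at h
    refine ⟨β (v - m*ζ) i + q, ?_⟩
    rw [h]
    have hq' : (m:ℝ) + (i:ℕ) = (j:ℕ) + (K:ℝ)*q := by exact_mod_cast hq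
    push_cast
    linear_combination ζ * hq'
  · -- injectivity
    -- the sum of the labels recovers m
    have hsum : ∀ v ∈ Vr0, ∀ m : ℤ, ∑ j : Fin K, α (v + (m:ℝ)*ζ) j = (K:ℝ)*(m:ℝ)*ζ := by
      intro v hv m
      have hre : ∑ j : Fin K, α (v + (m:ℝ)*ζ) j
          = ∑ i : Fin K, α (v + (m:ℝ)*ζ) (((m + (i:ℤ) : ℤ)) : Fin K) := by
        rw [← Equiv.sum_comp (Equiv.addLeft ((m:ℤ) : Fin K)) (α (v + (m:ℝ)*ζ))]
        refine Finset.sum_congr rfl fun i _ => ?_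
        congr 1
        push_cast [Fin.cast_val_eq_self]
        rfl
      rw [hre]
      have : ∀ i : Fin K, α (v + (m:ℝ)*ζ) (((m + (i:ℤ) : ℤ)) : Fin K)
          = ((K : ℝ) * ζ * (β v i : ℝ) + (2 * (i : ℝ) - K + 1) * ζ / 2) + (m : ℝ) * ζ :=
        fun i => hα v hv m i
      rw [Finset.sum_congr rfl (fun i _ => this i)]
      have hb : ∑ i : Fin K, ((β v i : ℝ)) = 0 := by
        have := hβ0 v hv
        push_cast [← this]
        norm_cast
      have hgauss : (∑ i : Fin K, ((i:ℕ):ℝ)) = K*(K-1)/2 := by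
        rw [Fin.sum_univ_eq_sum_range (fun i => ((i:ℕ):ℝ)) K]
        have h := Finset.sum_range_id_mul_two K
        have h1 : ((K*(K-1):ℕ):ℝ) = (K:ℝ)*((K:ℝ)-1) := by
          push_cast [Nat.cast_sub (show 1 ≤ K by omega)]; ring
        have h2 : ((∑ i ∈ Finset.range K, i : ℕ) : ℝ) * 2 = (K:ℝ) * ((K:ℝ)-1) := by
          rw [← h1]; exact_mod_cast congrArg (Nat.cast : ℕ → ℝ) h
        push_cast at h2 ⊢
        linarith
      have hcard : (Finset.univ : Finset (Fin K)).card = K := by simp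
      rw [show (fun i : Fin K => ((K : ℝ) * ζ * (β v i : ℝ) + (2 * (i : ℝ) - K + 1) * ζ / 2) + (m : ℝ) * ζ)
          = (fun i : Fin K => (K : ℝ) * ζ * (β v i : ℝ) + ((2 * ((i:ℕ) : ℝ) - K + 1) * (ζ / 2) + (m : ℝ) * ζ)) from
          funext fun i => by ring]
      rw [Finset.sum_add_distrib, ← Finset.mul_sum, hb, Finset.sum_add_distrib,
        Finset.sum_const, hcard, ← Finset.sum_mul]
      have : (∑ i : Fin K, (2 * ((i:ℕ) : ℝ) - K + 1)) = 0 := by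
        rw [show (fun i : Fin K => 2 * ((i:ℕ) : ℝ) - (K:ℝ) + 1)
            = (fun i : Fin K => 2 * ((i:ℕ) : ℝ) + (1 - (K:ℝ))) from funext fun i => by ring]
        rw [Finset.sum_add_distrib, ← Finset.mul_sum, hgauss, Finset.sum_const, hcard]
        push_cast
        ring
      rw [this]
      push_cast
      ring
    intro v1 hv1 v2 hv2 hαeq
    obtain ⟨m1, hw1⟩ := hdec v1 hv1
    obtain ⟨m2, hw2⟩ := hdec v2 hv2
    have e1 : v1 - (m1:ℝ)*ζ + (m1:ℝ)*ζ = v1 := by ring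
    have e2 : v2 - (m2:ℝ)*ζ + (m2:ℝ)*ζ = v2 := by ring
    have hs1 := hsum _ hw1 m1
    have hs2 := hsum _ hw2 m2
    rw [e1] at hs1
    rw [e2] at hs2
    have hmr : (K:ℝ)*(m1:ℝ)*ζ = (K:ℝ)*(m2:ℝ)*ζ := by
      rw [← hs1, ← hs2, hαeq]
    have hm : m1 = m2 := by
      have h3 := mul_right_cancel₀ hζ' hmr
      have h4 := mul_left_cancel₀ (ne_of_gt hK0) h3
      exact_mod_cast h4
    subst hm
    have hb : β (v1 - (m1:ℝ)*ζ) = β (v2 - (m1:ℝ)*ζ) := by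
      funext i
      have h1 := hα _ hw1 m1 i
      have h2 := hα _ hw2 m1 i
      rw [e1] at h1
      rw [e2] at h2
      rw [hαeq] at h1
      rw [h2] at h1
      have hc : (K:ℝ)*ζ*((β (v1 - (m1:ℝ)*ζ) i : ℝ)) = (K:ℝ)*ζ*((β (v2 - (m1:ℝ)*ζ) i : ℝ)) := by
        linarith
      have := mul_left_cancel₀ (show (K:ℝ)*ζ ≠ 0 by positivity) hc
      exact_mod_cast this
    have := hβinj hw1 hw2 hb
    linarith
end

section
/- Fix integers K ≥ 2, a real ζ > 0, a positive integer M, and an integer κ with 1 ≤ κ < K. Let Λ = {X ∈ ℤ^K : Σ_i x_i = 0}; for X ∈ Λ write λ_i(X) = Kζ·x_i + (2i−K+1)ζ/2 and J(X) = Σ_{i=0}^{K−1} λ_i(X)² = K²ζ²‖X+s‖², where s_i = (2i−K+1)/(2K). Let μ_0 ≤ μ_1 ≤ μ_2 ≤ … be the nondecreasing enumeration of the multiset {J(X) : X ∈ Λ} (well defined because {X ∈ Λ : J(X) ≤ R} is finite for every R). Then for every injective map f : V_r(0) → Λ, Σ_{λ_c ∈ V_r(0)} Σ_{S ⊆ {0,…,K−1},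 |S|=κ} (λ_c − (1/κ)·Σ_{j∈S} λ_j(f(λ_c)))² ≥ C(K,κ)·[ Σ_{λ_c ∈ V_r(0)} λ_c² + ((K−κ)/(K·κ·(K−1)))·Σ_{i=0}^{M−1} μ_i ], with equality whenever f is a bijection from V_r(0) onto a set of M vectors of Λ attaining the M smallest values of J. In particular, the optimal index assignment of the M central points of V_r(0) to centroid-0 K-tuples is achieved by any bijection onto the M tuples of smallest SSD cost, simultaneously for every κ < K. -/
section AuxOptIdx
open Finset
-- counting lemma
lemma aux_count {α : Type*} [DecidableEq α] (s t : Finset α) (ht : t ⊆ s) (k : ℕ)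
    (htk : t.card ≤ k) :
    ((s.powersetCard k).filter (fun S => t ⊆ S)).card = (s.card - t.card).choose (k - t.card) := by
  rw [← Finset.card_sdiff_of_subset ht, ← Finset.card_powersetCard]
  apply Finset.card_bij' (fun S _ => S \ t) (fun U _ => U ∪ t)
  · intro S hS
    simp only [mem_filter, mem_powersetCard] at hS
    obtain ⟨⟨hSs, hScard⟩, htS⟩ := hS
    rw [mem_powersetCard]
    exact ⟨sdiff_subset_sdiff hSs Subset.rfl, by rw [card_sdiff_of_subset htS, hScard]⟩
  · intro U hU
    rw [mem_powersetCard] at hU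
    obtain ⟨hUs, hUcard⟩ := hU
    have hdisj : Disjoint U t := disjoint_of_subset_left hUs sdiff_disjoint
    simp only [mem_filter, mem_powersetCard]
    refine ⟨⟨?_, ?_⟩, subset_union_right⟩
    · exact union_subset (hUs.trans (sdiff_subset)) ht
    · rw [card_union_of_disjoint hdisj, hUcard]
      omega
  · intro S hS
    simp only [mem_filter] at hS
    exact sdiff_union_of_subset hS.2
  · intro U hU
    rw [mem_powersetCard] at hU
    exact union_sdiff_cancel_right (disjoint_of_subset_left hU.1 sdiff_disjoint)

lemma aux_inner (K κ : ℕ) (hK : 2 ≤ K) (hκ1 : 1 ≤ κ) (hκK : κ < K)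
    (L : Fin K → ℝ) (hL : ∑ i, L i = 0) (v : ℝ) :
    ∑ S ∈ Finset.univ.powersetCard κ, (v - (1/(κ:ℝ)) * ∑ j ∈ S, L j)^2
      = (K.choose κ : ℝ) * (v^2 + ((K - κ : ℝ)/((K:ℝ)*κ*(K-1))) * ∑ i, (L i)^2) := by
  classical
  set P : Finset (Finset (Fin K)) := Finset.univ.powersetCard κ with hP
  have hcardP : P.card = K.choose κ := by
    simp [hP, card_powersetCard]
  -- counts
  have hN1 : ∀ j : Fin K, ((P.filter (fun S => j ∈ S)).card : ℝ)
      = (((K-1).choose (κ-1) : ℕ) : ℝ) := by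
    intro j
    have h := aux_count (Finset.univ : Finset (Fin K)) {j} (by simp) κ (by simpa using hκ1)
    simp only [Finset.singleton_subset_iff, Finset.card_singleton, card_univ,
      Fintype.card_fin] at h
    rw [hP]
    exact_mod_cast h
  set c1 : ℝ := (((K-1).choose (κ-1) : ℕ) : ℝ) with hc1def
  set c2 : ℝ := c1 * ((κ:ℝ)-1)/((K:ℝ)-1) with hc2def
  have hKne : (K:ℝ) ≠ 0 := by positivity
  have hK1ne : (K:ℝ) - 1 ≠ 0 := by
    have : (2:ℝ) ≤ K := by exact_mod_cast hK
    linarith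
  have hκne : (κ:ℝ) ≠ 0 := by positivity
  have hc1 : (K:ℝ) * c1 = (κ:ℝ) * (K.choose κ : ℕ) := by
    have h := Nat.add_one_mul_choose_eq (K-1) (κ-1)
    have h1 : K - 1 + 1 = K := by omega
    have h2 : κ - 1 + 1 = κ := by omega
    rw [h1] at h
    rw [h2] at h
    rw [hc1def, mul_comm (κ:ℝ)]
    exact_mod_cast h
  have hN2 : ∀ j l : Fin K, j ≠ l →
      ((P.filter (fun S => j ∈ S ∧ l ∈ S)).card : ℝ) = c2 := by
    intro j l hjl
    by_cases hκ : κ = 1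
    · have : P.filter (fun S => j ∈ S ∧ l ∈ S) = ∅ := by
        rw [Finset.eq_empty_iff_forall_notMem]
        intro S hS
        simp only [Finset.mem_filter, hP, Finset.mem_powersetCard] at hS
        obtain ⟨⟨_, hcard⟩, hj, hl⟩ := hS
        have : ({j, l} : Finset (Fin K)) ⊆ S := by
          simp [Finset.insert_subset_iff, hj, hl]
        have h2 := Finset.card_le_card this
        rw [Finset.card_insert_of_notMem (by simpa using hjl), Finset.card_singleton] at h2
        omega
      rw [this]
      simp [hc2def, hκ]
    · have hκ2 : 2 ≤ κ := by omega
      have hcard2 : ({j, l} : Finset (Fin K)).card = 2 := by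
        rw [Finset.card_insert_of_notMem (by simpa using hjl), Finset.card_singleton]
      have h := aux_count (Finset.univ : Finset (Fin K)) {j, l} (by simp) κ
        (by rw [hcard2]; exact hκ2)
      rw [hcard2, card_univ, Fintype.card_fin] at h
      have hsub : ∀ S : Finset (Fin K), ({j, l} : Finset (Fin K)) ⊆ S ↔ (j ∈ S ∧ l ∈ S) := by
        intro S; simp [Finset.insert_subset_iff]
      simp only [hsub] at h
      rw [hP] at *
      rw [h]
      -- now need ((K-2).choose (κ-2) : ℝ) = c2
      have hnat : (K-1) * ((K-2).choose (κ-2)) = ((K-1).choose (κ-1)) * (κ-1) := by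
        have h' := Nat.add_one_mul_choose_eq (K-2) (κ-2)
        have e1 : K - 2 + 1 = K-1 := by omega
        have e2 : κ - 2 + 1 = κ - 1 := by omega
        rw [e1] at h'
        rw [e2] at h'
        exact h'
      have hcast : ((K:ℝ)-1) * ((K-2).choose (κ-2) : ℕ) = c1 * ((κ:ℝ)-1) := by
        have e1 : ((K:ℝ)-1) = ((K-1 : ℕ) : ℝ) := by
          have : (1:ℕ) ≤ K := by omega
          push_cast [this]; ring
        have e2 : ((κ:ℝ)-1) = ((κ-1 : ℕ) : ℝ) := by
          push_cast [hκ1]; ring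
        rw [e1, e2, hc1def]
        exact_mod_cast hnat
      rw [hc2def]
      field_simp
      linarith [hcast]
  -- algebraic part
  have hcount : ∀ (p : Finset (Fin K) → Prop) [DecidablePred p] (c : ℝ),
      ∑ S ∈ P, (if p S then c else 0) = ((P.filter p).card : ℝ) * c := by
    intro p _ c
    rw [← Finset.sum_filter, Finset.sum_const, nsmul_eq_mul]
  have hS1 : ∀ S : Finset (Fin K), (∑ j ∈ S, L j) = ∑ j : Fin K, if j ∈ S then L j else 0 := by
    intro S; rw [Finset.sum_ite_mem, Finset.univ_inter]
  have key1 : ∑ S ∈ P, (∑ j ∈ S, L j) = c1 * (∑ i, L i) := by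
    calc ∑ S ∈ P, (∑ j ∈ S, L j)
        = ∑ S ∈ P, ∑ j : Fin K, (if j ∈ S then L j else 0) := Finset.sum_congr rfl fun S _ => hS1 S
      _ = ∑ j : Fin K, ∑ S ∈ P, (if j ∈ S then L j else 0) := Finset.sum_comm
      _ = ∑ j : Fin K, ((P.filter (fun S => j ∈ S)).card : ℝ) * L j :=
          Finset.sum_congr rfl fun j _ => hcount _ _
      _ = ∑ j : Fin K, c1 * L j := by
          refine Finset.sum_congr rfl fun j _ => ?_
          rw [hN1 j, hc1def]
      _ = c1 * (∑ i, L i) := by rw [Finset.mul_sum]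
  have key2 : ∑ S ∈ P, (∑ j ∈ S, L j)^2
      = c2 * (∑ i, L i)^2 + (c1 - c2) * ∑ i, (L i)^2 := by
    have hexp : ∀ S : Finset (Fin K), (∑ j ∈ S, L j)^2
        = ∑ j : Fin K, ∑ l : Fin K, (if j ∈ S ∧ l ∈ S then L j * L l else 0) := by
      intro S
      rw [sq, hS1 S, Finset.sum_mul_sum]
      refine Finset.sum_congr rfl fun j _ => Finset.sum_congr rfl fun l _ => ?_
      by_cases hj : j ∈ S <;> by_cases hl : l ∈ S <;> simp [hj, hl]
    calc ∑ S ∈ P, (∑ j ∈ S, L j)^2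
        = ∑ S ∈ P, ∑ j : Fin K, ∑ l : Fin K, (if j ∈ S ∧ l ∈ S then L j * L l else 0) :=
          Finset.sum_congr rfl fun S _ => hexp S
      _ = ∑ j : Fin K, ∑ l : Fin K, ∑ S ∈ P, (if j ∈ S ∧ l ∈ S then L j * L l else 0) := by
          rw [Finset.sum_comm]
          exact Finset.sum_congr rfl fun j _ => Finset.sum_comm
      _ = ∑ j : Fin K, ∑ l : Fin K,
            ((P.filter (fun S => j ∈ S ∧ l ∈ S)).card : ℝ) * (L j * L l) :=
          Finset.sum_congr rfl fun j _ => Finset.sum_congr rfl fun l _ => hcount _ _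
      _ = ∑ j : Fin K, ∑ l : Fin K,
            (c2 * (L j * L l) + (if j = l then (c1 - c2) else 0) * (L j * L l)) := by
          refine Finset.sum_congr rfl fun j _ => Finset.sum_congr rfl fun l _ => ?_
          by_cases hjl : j = l
          · subst hjl
            have : (P.filter (fun S => j ∈ S ∧ j ∈ S)) = P.filter (fun S => j ∈ S) := by
              simp
            rw [this, hN1 j]
            rw [if_pos rfl]; ring
          · rw [hN2 j l hjl]
            simp [hjl]
      _ = c2 * (∑ i, L i)^2 + (c1 - c2) * ∑ i, (L i)^2 := by
          rw [Finset.sum_congr rfl (fun j _ => Finset.sum_add_distrib)]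
          rw [Finset.sum_add_distrib]
          congr 1
          · rw [sq, Finset.sum_mul_sum, Finset.mul_sum]
            exact Finset.sum_congr rfl fun j _ => by rw [Finset.mul_sum]
          · have : ∀ j : Fin K, ∑ l : Fin K, (if j = l then (c1 - c2) else 0) * (L j * L l)
                = (c1 - c2) * (L j)^2 := by
              intro j
              rw [Finset.sum_eq_single j]
              · rw [if_pos rfl]; ring
              · intro l _ hlj
                simp [Ne.symm hlj]
              · simp
            rw [Finset.sum_congr rfl fun j _ => this j, ← Finset.mul_sum]
    -- end key2
  have hc1val : c1 = (κ:ℝ) * (K.choose κ : ℕ) / K := by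
    field_simp
    linarith [hc1]
  calc ∑ S ∈ P, (v - (1/(κ:ℝ)) * ∑ j ∈ S, L j)^2
      = ∑ S ∈ P, (v^2 - (2*v/κ) * (∑ j ∈ S, L j) + (1/(κ:ℝ))^2 * (∑ j ∈ S, L j)^2) := by
        refine Finset.sum_congr rfl fun S _ => ?_
        ring
    _ = (P.card : ℝ) * v^2 - (2*v/κ) * (∑ S ∈ P, (∑ j ∈ S, L j))
          + (1/(κ:ℝ))^2 * (∑ S ∈ P, (∑ j ∈ S, L j)^2) := by
        rw [Finset.sum_add_distrib, Finset.sum_sub_distrib, Finset.sum_const,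
          nsmul_eq_mul, ← Finset.mul_sum, ← Finset.mul_sum]
    _ = (K.choose κ : ℝ) * (v^2 + ((K - κ : ℝ)/((K:ℝ)*κ*(K-1))) * ∑ i, (L i)^2) := by
        rw [hcardP, key1, key2, hL, hc2def, hc1val]
        push_cast
        field_simp
        ring

lemma aux_sum_range_le (μ : ℕ → ℝ) (hmono : Monotone μ) :
    ∀ (M : ℕ) (T : Finset ℕ), T.card = M → ∑ i ∈ Finset.range M, μ i ≤ ∑ m ∈ T, μ m := by
  intro M
  induction M with
  | zero =>
    intro T hT
    rw [Finset.card_eq_zero] at hT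
    simp [hT]
  | succ n ih =>
    intro T hT
    have hne : T.Nonempty := by rw [← Finset.card_pos, hT]; omega
    set m := T.max' hne with hm
    have hmem : m ∈ T := T.max'_mem hne
    have hub : n ≤ m := by
      by_contra h
      push_neg at h
      have hsub : T ⊆ Finset.range (m+1) := fun x hx =>
        Finset.mem_range.2 (by have := Finset.le_max' T x hx; omega)
      have := Finset.card_le_card hsub
      rw [hT, Finset.card_range] at this
      omega
    have hih : ∑ i ∈ Finset.range n, μ i ≤ ∑ x ∈ T.erase m, μ x :=
      ih _ (by rw [Finset.card_erase_of_mem hmem, hT]; omega)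
    calc ∑ i ∈ Finset.range (n+1), μ i = ∑ i ∈ Finset.range n, μ i + μ n :=
          Finset.sum_range_succ μ n
      _ ≤ ∑ x ∈ T.erase m, μ x + μ m := add_le_add hih (hmono hub)
      _ = ∑ x ∈ T, μ x := Finset.sum_erase_add T μ hmem

end AuxOptIdx

open Finset in
/-- Optimality of the index assignment of the `M` central points of `V_r(0)` to
centroid-0 K-tuples: for every injective `f : V_r(0) → Λ` (with
`Λ = {X ∈ ℤ^K : Σ_i x_i = 0}`), the total labeling cost for `κ < K` received
descriptions is at least
`C(K,κ)·(Σ_{λ_c} λ_c² + ((K−κ)/(Kκ(K−1)))·Σ_{i<M} μ_i)`, where `μ` is the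
nondecreasing enumeration of the multiset of SSD costs `{J(X) : X ∈ Λ}`;
equality holds whenever the image of `f` attains the `M` smallest values of `J`. -/
theorem optimal_index_assignment
    (K : ℕ) (hK : 2 ≤ K) (ζ : ℝ) (hζ : 0 < ζ) (M : ℕ) (hM : 0 < M)
    (κ : ℕ) (hκ1 : 1 ≤ κ) (hκK : κ < K)
    (lam : (Fin K → ℤ) → Fin K → ℝ)
    (hlam : ∀ X : Fin K → ℤ, ∀ i : Fin K,
      lam X i = (K : ℝ) * ζ * (X i : ℝ) + (2 * (i : ℝ) - K + 1) * ζ / 2)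
    (J : (Fin K → ℤ) → ℝ) (hJ : ∀ X, J X = ∑ i : Fin K, (lam X i) ^ 2)
    (e : ℕ ≃ {X : Fin K → ℤ // ∑ i : Fin K, X i = 0})
    (μ : ℕ → ℝ) (hμ : ∀ n, μ n = J (e n).1) (hmono : Monotone μ)
    (Vr0 : Finset ℝ)
    (hVr0 : Vr0 = (Finset.range M).image
        (fun k : ℕ => ζ * (2 * (k : ℝ) - M + 1) / (2 * M)))
    (f : ℝ → (Fin K → ℤ))
    (hf0 : ∀ v ∈ Vr0, ∑ i : Fin K, f v i = 0)
    (hfinj : Set.InjOn f Vr0) :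
    (∑ v ∈ Vr0, ∑ S ∈ Finset.univ.powersetCard κ,
          (v - (1 / (κ : ℝ)) * ∑ j ∈ S, lam (f v) j) ^ 2
        ≥ (K.choose κ : ℝ) * ((∑ v ∈ Vr0, v ^ 2)
            + ((K - κ : ℝ) / ((K : ℝ) * κ * (K - 1))) * ∑ i ∈ Finset.range M, μ i)) ∧
    (Vr0.val.map (fun v => J (f v)) = (Multiset.range M).map μ →
      ∑ v ∈ Vr0, ∑ S ∈ Finset.univ.powersetCard κ,
          (v - (1 / (κ : ℝ)) * ∑ j ∈ S, lam (f v) j) ^ 2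
        = (K.choose κ : ℝ) * ((∑ v ∈ Vr0, v ^ 2)
            + ((K - κ : ℝ) / ((K : ℝ) * κ * (K - 1))) * ∑ i ∈ Finset.range M, μ i)) := by
  classical
  set C : ℝ := (K.choose κ : ℝ) with hC
  set α : ℝ := ((K - κ : ℝ) / ((K : ℝ) * κ * (K - 1))) with hα
  -- the constant part of lam sums to zero
  have hgauss : ((∑ i ∈ Finset.range K, i : ℕ) : ℝ) * 2 = (K:ℝ) * ((K:ℝ) - 1) := by
    have h := Finset.sum_range_id_mul_two K
    have h1K : (1:ℕ) ≤ K := by omega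
    have := congrArg (fun n : ℕ => (n:ℝ)) h
    push_cast [Nat.cast_sub h1K] at this
    simpa using this
  have hconst : ∑ i : Fin K, (2 * (i : ℝ) - K + 1) = 0 := by
    rw [Fin.sum_univ_eq_sum_range (fun i => 2 * (i : ℝ) - K + 1) K]
    rw [Finset.sum_add_distrib, Finset.sum_sub_distrib, ← Finset.mul_sum,
      Finset.sum_const, Finset.card_range, Finset.sum_const, Finset.card_range,
      nsmul_eq_mul, nsmul_eq_mul, mul_one]
    have : ∑ i ∈ Finset.range K, (i : ℝ) = ((∑ i ∈ Finset.range K, i : ℕ) : ℝ) := by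
      push_cast; rfl
    rw [this]
    linarith [hgauss]
  have hlam0 : ∀ v ∈ Vr0, ∑ i : Fin K, lam (f v) i = 0 := by
    intro v hv
    have hx : ((∑ i : Fin K, f v i : ℤ) : ℝ) = 0 := by rw [hf0 v hv]; simp
    push_cast at hx
    calc ∑ i : Fin K, lam (f v) i
        = ∑ i : Fin K, ((K : ℝ) * ζ * (f v i : ℝ) + (2 * (i : ℝ) - K + 1) * ζ / 2) :=
          Finset.sum_congr rfl fun i _ => hlam (f v) i
      _ = (K : ℝ) * ζ * (∑ i : Fin K, (f v i : ℝ))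
            + (∑ i : Fin K, (2 * (i : ℝ) - K + 1)) * ζ / 2 := by
          rw [Finset.sum_add_distrib, ← Finset.mul_sum, ← Finset.sum_div, ← Finset.sum_mul]
      _ = 0 := by rw [hx, hconst]; ring
  -- the per-point identity
  have hper : ∀ v ∈ Vr0, ∑ S ∈ Finset.univ.powersetCard κ,
      (v - (1 / (κ : ℝ)) * ∑ j ∈ S, lam (f v) j) ^ 2 = C * (v ^ 2 + α * J (f v)) := by
    intro v hv
    rw [hJ]
    exact aux_inner K κ hK hκ1 hκK (lam (f v)) (hlam0 v hv) v
  have hLHS : ∑ v ∈ Vr0, ∑ S ∈ Finset.univ.powersetCard κ,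
      (v - (1 / (κ : ℝ)) * ∑ j ∈ S, lam (f v) j) ^ 2
      = C * (∑ v ∈ Vr0, v ^ 2) + C * α * (∑ v ∈ Vr0, J (f v)) := by
    rw [Finset.sum_congr rfl hper]
    rw [Finset.sum_congr rfl (fun v _ => by ring :
      ∀ v ∈ Vr0, C * (v ^ 2 + α * J (f v)) = C * v ^ 2 + C * α * J (f v))]
    rw [Finset.sum_add_distrib, ← Finset.mul_sum, ← Finset.mul_sum]
  -- nonnegativity of the constants
  have hCpos : 0 ≤ C := by positivity
  have hαpos : 0 ≤ α := by
    apply div_nonneg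
    · have : (κ:ℝ) ≤ K := by exact_mod_cast hκK.le
      linarith
    · have h1 : (0:ℝ) < K := by positivity
      have h2 : (0:ℝ) < κ := by positivity
      have h3 : (1:ℝ) ≤ K := by exact_mod_cast (by omega : 1 ≤ K)
      nlinarith
  constructor
  · -- inequality
    -- translate sum over Vr0 of J (f v) into sum over a finset of naturals
    set g : ℝ → ℕ := fun v => if h : ∑ i : Fin K, f v i = 0 then e.symm ⟨f v, h⟩ else 0 with hg
    have hμg : ∀ v ∈ Vr0, J (f v) = μ (g v) := by
      intro v hv
      rw [hg]
      simp only [dif_pos (hf0 v hv)]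
      rw [hμ, Equiv.apply_symm_apply]
    have hginj : Set.InjOn g Vr0 := by
      intro v hv w hw hgv
      rw [hg] at hgv
      simp only [dif_pos (hf0 v hv), dif_pos (hf0 w hw)] at hgv
      have := e.symm.injective hgv
      have : f v = f w := congrArg Subtype.val this
      exact hfinj hv hw this
    have hVcard : Vr0.card = M := by
      rw [hVr0, Finset.card_image_of_injOn, Finset.card_range]
      intro k hk k' hk' hkk'
      simp only at hkk'
      have h2M : (0:ℝ) < 2 * M := by positivity
      have h1 : ζ * (2 * (k:ℝ) - M + 1) = ζ * (2 * (k':ℝ) - M + 1) := by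
        have := congrArg (fun x : ℝ => x * (2 * M)) hkk'
        simpa [div_mul_cancel₀, ne_of_gt h2M] using this
      have h2 : (2 * (k:ℝ) - M + 1) = (2 * (k':ℝ) - M + 1) :=
        mul_left_cancel₀ (ne_of_gt hζ) h1
      have : (k:ℝ) = (k':ℝ) := by linarith
      exact_mod_cast this
    have hsumJ : ∑ i ∈ Finset.range M, μ i ≤ ∑ v ∈ Vr0, J (f v) := by
      have himg : ∑ v ∈ Vr0, J (f v) = ∑ m ∈ Vr0.image g, μ m := by
        rw [Finset.sum_image (fun x hx y hy h => hginj hx hy h)]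
        exact Finset.sum_congr rfl hμg
      rw [himg]
      exact aux_sum_range_le μ hmono M _ (by rw [Finset.card_image_of_injOn hginj, hVcard])
    rw [hLHS]
    have := mul_le_mul_of_nonneg_left hsumJ (mul_nonneg hCpos hαpos)
    have hexp : C * ((∑ v ∈ Vr0, v ^ 2) + α * ∑ i ∈ Finset.range M, μ i)
        = C * (∑ v ∈ Vr0, v ^ 2) + C * α * ∑ i ∈ Finset.range M, μ i := by ring
    rw [hexp]
    linarith
  · -- equality
    intro hmul
    have hsumJ : ∑ v ∈ Vr0, J (f v) = ∑ i ∈ Finset.range M, μ i := by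
      rw [Finset.sum, Finset.sum, hmul, Finset.range_val]
    rw [hLHS, hsumJ]
    ring
end

section
/- Fix an integer K ≥ 2. Let A_{K−1} = {X ∈ ℤ^K : Σ_j x_j = 0}, let s ∈ ℝ^K have components s_j = (2j−K+1)/(2K), let [i] (0 ≤ i ≤ K−1) be the glue vectors, and let A*_{K−1} = ⋃_{i=0}^{K−1} ([i] + A_{K−1}) be the dual lattice. Then for every real r ≥ 0, the sets {y ∈ A*_{K−1} + s : ‖y‖² = r} and {y ∈ A_{K−1} + s : ‖y‖² = r} are finite, and the cardinality of the first equals K times the cardinality of the second. (Equivalently, the theta series satisfy Θ_{A_{K−1}+s}(z) = (1/K)·Θ_{A*_{K−1}+s}(z).) -/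
private lemma euclid_norm_comp_equiv {K : ℕ} (y z : EuclideanSpace ℝ (Fin K))
    (π : Fin K ≃ Fin K) (hz : ∀ j, z j = y (π j)) : ‖z‖ = ‖y‖ := by
  rw [EuclideanSpace.norm_eq, EuclideanSpace.norm_eq]
  rw [show (∑ i : Fin K, ‖z i‖ ^ 2) = ∑ i : Fin K, ‖y (π i)‖ ^ 2 from
    Finset.sum_congr rfl fun i _ => by rw [hz]]
  exact congrArg Real.sqrt (Equiv.sum_comp π fun j => ‖y j‖ ^ 2)

private lemma euclid_coord_le_norm {K : ℕ} (x : EuclideanSpace ℝ (Fin K)) (j : Fin K) :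
    |x j| ≤ ‖x‖ := by
  rw [EuclideanSpace.norm_eq]
  have h1 : |x j| = Real.sqrt (‖x j‖ ^ 2) := by
    rw [Real.sqrt_sq_eq_abs, Real.norm_eq_abs, abs_abs]
  rw [h1]
  exact Real.sqrt_le_sqrt (Finset.single_le_sum
    (f := fun i => ‖x i‖ ^ 2) (fun i _ => by positivity) (Finset.mem_univ j))

private lemma ncard_biUnion_range {α : Type*} (f : ℕ → Set α) :
    ∀ n : ℕ, (∀ i, i < n → (f i).Finite) →
      (∀ i j, i < n → j < n → i ≠ j → Disjoint (f i) (f j)) →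
      (⋃ i ∈ Finset.range n, f i).Finite ∧
      (⋃ i ∈ Finset.range n, f i).ncard = ∑ i ∈ Finset.range n, (f i).ncard := by
  intro n
  induction n with
  | zero => simp
  | succ n ih =>
    intro hfin hdisj
    obtain ⟨hF, hC⟩ := ih (fun i hi => hfin i (by omega))
      (fun i j hi hj => hdisj i j (by omega) (by omega))
    have hsplit : (⋃ i ∈ Finset.range (n + 1), f i)
        = (⋃ i ∈ Finset.range n, f i) ∪ f n := by
      rw [Finset.range_add_one]
      simp [Set.biUnion_insert, Set.union_comm]
    have hdisj' : Disjoint (⋃ i ∈ Finset.range n, f i) (f n) := by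
      rw [Set.disjoint_left]
      rintro a ha han
      simp only [Set.mem_iUnion, Finset.mem_range] at ha
      obtain ⟨i, hi, hai⟩ := ha
      exact Set.disjoint_left.mp
        (hdisj i n (by omega) (by omega) (by omega)) hai han
    refine ⟨?_, ?_⟩
    · rw [hsplit]; exact hF.union (hfin n (by omega))
    · rw [hsplit, Set.ncard_union_eq hdisj' hF (hfin n (by omega)), hC,
        Finset.sum_range_succ]

open Fin.NatCast

/-- Shell-counting form of the theta-series identity
`Θ_{A_{K−1}+s}(z) = (1/K)·Θ_{A*_{K−1}+s}(z)`: for every `r ≥ 0`, the shells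
`{y ∈ A*_{K−1}+s : ‖y‖² = r}` and `{y ∈ A_{K−1}+s : ‖y‖² = r}` are finite and
the former has exactly `K` times as many points as the latter. Here
`A*_{K−1} = ⋃_{i<K} ([i] + A_{K−1})` is the dual lattice and `[i]` the glue
vectors. -/
theorem theta_series_shell_relation
    (K : ℕ) (hK : 2 ≤ K)
    (s : EuclideanSpace ℝ (Fin K))
    (hs : ∀ j : Fin K, s j = (2 * (j : ℝ) - K + 1) / (2 * K))
    (g : ℕ → EuclideanSpace ℝ (Fin K))
    (hg : ∀ i : ℕ, ∀ j : Fin K,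
      g i j = if (j : ℕ) < K - i then (i : ℝ) / K else ((i : ℝ) - K) / K)
    (latt dual Aplus dualPlus : Set (EuclideanSpace ℝ (Fin K)))
    (hlatt : latt = {v | ∃ Y : Fin K → ℤ,
        (∑ j : Fin K, Y j) = 0 ∧ ∀ j : Fin K, v j = (Y j : ℝ)})
    (hdual : dual = {v | ∃ i : ℕ, i < K ∧ ∃ w ∈ latt, v = g i + w})
    (hAplus : Aplus = {v | ∃ w ∈ latt, v = w + s})
    (hdualPlus : dualPlus = {v | ∃ w ∈ dual, v = w + s}) :
    ∀ r : ℝ, 0 ≤ r →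
      {y ∈ dualPlus | ‖y‖ ^ 2 = r}.Finite ∧
      {y ∈ Aplus | ‖y‖ ^ 2 = r}.Finite ∧
      {y ∈ dualPlus | ‖y‖ ^ 2 = r}.ncard = K * {y ∈ Aplus | ‖y‖ ^ 2 = r}.ncard := by
  haveI : NeZero K := ⟨by omega⟩
  have hKR : (0 : ℝ) < K := by exact_mod_cast (by omega : 0 < K)
  intro r hr
  classical
  set S : Set (EuclideanSpace ℝ (Fin K)) := {y ∈ Aplus | ‖y‖ ^ 2 = r} with hSdef
  -- key identity: g i + s is a cyclic shift of s
  have key : ∀ i : ℕ, i < K → ∀ j : Fin K,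
      g i j + s j = s (j + (i : Fin K)) := by
    intro i hi j
    have hval : ((j + (i : Fin K)) : Fin K).val = ((j : ℕ) + i) % K := by
      rw [Fin.val_add, Fin.val_natCast, Nat.mod_eq_of_lt hi]
    have hcast : (((j + (i : Fin K)) : Fin K) : ℝ) = ((((j : ℕ) + i) % K : ℕ) : ℝ) := by
      exact_mod_cast congrArg (Nat.cast : ℕ → ℝ) hval
    rw [hg i j, hs j, hs (j + (i : Fin K)), hcast]
    have hjK : (j : ℕ) < K := j.isLt
    by_cases hj : (j : ℕ) < K - i
    · rw [if_pos hj, Nat.mod_eq_of_lt (by omega)]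
      push_cast
      field_simp
      ring
    · rw [if_neg hj]
      have hmod : ((j : ℕ) + i) % K = (j : ℕ) + i - K := by
        rw [Nat.mod_eq_sub_mod (by omega)]
        exact Nat.mod_eq_of_lt (by omega)
      rw [hmod, Nat.cast_sub (by omega)]
      push_cast
      field_simp
      ring
  -- coset-shell sets
  set T : ℕ → Set (EuclideanSpace ℝ (Fin K)) :=
    fun i => (fun y : EuclideanSpace ℝ (Fin K) =>
      (WithLp.toLp 2 (fun j => y (j + (i : Fin K))) : EuclideanSpace ℝ (Fin K))) '' S with hTdef
  -- characterization of T i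
  have claimA : ∀ i : ℕ, i < K → ∀ z : EuclideanSpace ℝ (Fin K),
      z ∈ T i ↔ ((∃ w ∈ latt, z = g i + w + s) ∧ ‖z‖ ^ 2 = r) := by
    intro i hi z
    constructor
    · rintro ⟨y, ⟨hyA, hyr⟩, rfl⟩
      rw [hAplus] at hyA
      obtain ⟨w, hw, rfl⟩ := hyA
      rw [hlatt] at hw
      obtain ⟨Y, hsum, hY⟩ := hw
      constructor
      · refine ⟨(WithLp.toLp 2 (fun j => (Y (j + (i : Fin K)) : ℝ)) : EuclideanSpace ℝ (Fin K)), ?_, ?_⟩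
        · rw [hlatt]
          exact ⟨fun j => Y (j + (i : Fin K)),
            by rw [← hsum]; exact Equiv.sum_comp (Equiv.addRight (i : Fin K)) Y,
            fun j => rfl⟩
        · ext j
          show (w + s) (j + (i : Fin K)) = g i j + (Y (j + (i : Fin K)) : ℝ) + s j
          have h2 : s (j + (i : Fin K)) = g i j + s j := (key i hi j).symm
          show w (j + (i : Fin K)) + s (j + (i : Fin K))
            = g i j + (Y (j + (i : Fin K)) : ℝ) + s j
          rw [h2, hY]
          ring
      · exact (congrArg (· ^ 2) (euclid_norm_comp_equiv (w + s) _
          (Equiv.addRight (i : Fin K)) fun j => rfl)).trans hyr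
    · rintro ⟨⟨w, hw, rfl⟩, hzr⟩
      rw [hlatt] at hw
      obtain ⟨Y, hsum, hY⟩ := hw
      refine ⟨(WithLp.toLp 2 (fun j => (g i + w + s) (j - (i : Fin K))) : EuclideanSpace ℝ (Fin K)),
        ⟨?_, ?_⟩, ?_⟩
      · rw [hAplus]
        refine ⟨(WithLp.toLp 2 (fun j => (Y (j - (i : Fin K)) : ℝ)) : EuclideanSpace ℝ (Fin K)), ?_, ?_⟩
        · rw [hlatt]
          exact ⟨fun j => Y (j - (i : Fin K)),
            by rw [← hsum]; exact Equiv.sum_comp (Equiv.subRight (i : Fin K)) Y,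
            fun j => rfl⟩
        · ext j
          have h2 : g i (j - (i : Fin K)) + s (j - (i : Fin K))
              = s ((j - (i : Fin K)) + (i : Fin K)) := key i hi _
          rw [sub_add_cancel] at h2
          show g i (j - (i : Fin K)) + w (j - (i : Fin K)) + s (j - (i : Fin K))
            = (Y (j - (i : Fin K)) : ℝ) + s j
          rw [hY]
          linarith [h2]
      · exact (congrArg (· ^ 2) (euclid_norm_comp_equiv (g i + w + s) _
          (Equiv.subRight (i : Fin K)) fun j => rfl)).trans hzr
      · ext j
        show (g i + w + s) ((j + (i : Fin K)) - (i : Fin K)) = (g i + w + s) j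
        rw [add_sub_cancel_right]
  -- the dual shell is the union of the coset shells
  have claimB : {y ∈ dualPlus | ‖y‖ ^ 2 = r} = ⋃ i ∈ Finset.range K, T i := by
    ext z
    simp only [Set.mem_sep_iff, Set.mem_iUnion, Finset.mem_range, hdualPlus, hdual,
      Set.mem_setOf_eq, exists_prop]
    constructor
    · rintro ⟨⟨v, ⟨i, hi, w, hw, rfl⟩, rfl⟩, hzr⟩
      exact ⟨i, hi, (claimA i hi _).mpr ⟨⟨w, hw, rfl⟩, hzr⟩⟩
    · rintro ⟨i, hi, hz⟩
      obtain ⟨⟨w, hw, rfl⟩, hzr⟩ := (claimA i hi _).mp hz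
      exact ⟨⟨g i + w, ⟨i, hi, w, hw, rfl⟩, rfl⟩, hzr⟩
  -- injectivity of the shift maps
  have hPinj : ∀ i : ℕ, Function.Injective
      (fun y : EuclideanSpace ℝ (Fin K) =>
        (WithLp.toLp 2 (fun j => y (j + (i : Fin K))) : EuclideanSpace ℝ (Fin K))) := by
    intro i y y' h
    ext j
    have h1 := congrFun (congrArg WithLp.ofLp h) (j - (i : Fin K))
    have h2 : j - (i : Fin K) + (i : Fin K) = j := sub_add_cancel j _
    calc y j = y (j - (i : Fin K) + (i : Fin K)) := by rw [h2]
      _ = y' (j - (i : Fin K) + (i : Fin K)) := h1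
      _ = y' j := by rw [h2]
  -- finiteness of S
  have hSfin : S.Finite := by
    set M : ℤ := ⌈Real.sqrt r⌉ + 1 with hM
    have hsub : S ⊆ (fun Y : Fin K → ℤ =>
        (WithLp.toLp 2 (fun j => (Y j : ℝ) + s j) : EuclideanSpace ℝ (Fin K))) ''
        ((Fintype.piFinset (fun _ : Fin K => Finset.Icc (-M) M) :
          Finset (Fin K → ℤ)) : Set (Fin K → ℤ)) := by
      rintro y ⟨hyA, hyr⟩
      rw [hAplus] at hyA
      obtain ⟨w, hw, rfl⟩ := hyA
      rw [hlatt] at hw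
      obtain ⟨Y, hsum, hY⟩ := hw
      refine ⟨Y, ?_, ?_⟩
      · rw [Finset.mem_coe, Fintype.mem_piFinset]
        intro j
        rw [Finset.mem_Icc, ← abs_le]
        have hnorm : ‖w + s‖ = Real.sqrt r := by
          rw [← hyr, Real.sqrt_sq (norm_nonneg _)]
        have hle : |(w + s) j| ≤ Real.sqrt r := by
          rw [← hnorm]; exact euclid_coord_le_norm (w + s) j
        have hsj : |s j| ≤ 1 := by
          rw [hs j, abs_div, abs_of_pos (by linarith : (0:ℝ) < 2 * K),
            div_le_one (by linarith : (0:ℝ) < 2 * K), abs_le]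
          have hjK : ((j : ℕ) : ℝ) < K := by exact_mod_cast j.isLt
          have hj0 : (0 : ℝ) ≤ ((j : ℕ) : ℝ) := Nat.cast_nonneg _
          have hK2 : (2 : ℝ) ≤ K := by exact_mod_cast hK
          constructor <;> linarith
        have hwj : |(Y j : ℝ)| ≤ Real.sqrt r + 1 := by
          have h1 : (Y j : ℝ) = (w + s) j - s j := by
            show (Y j : ℝ) = w j + s j - s j
            rw [hY]; ring
          rw [h1]
          calc |(w + s) j - s j| ≤ |(w + s) j| + |s j| := abs_sub _ _
            _ ≤ Real.sqrt r + 1 := by linarith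
        have hceil : Real.sqrt r ≤ (⌈Real.sqrt r⌉ : ℝ) := Int.le_ceil _
        have hMle : |(Y j : ℝ)| ≤ (M : ℝ) := by
          rw [hM]; push_cast; linarith
        exact_mod_cast hMle
      · ext j
        show (Y j : ℝ) + s j = w j + s j
        rw [hY]
    exact Set.Finite.subset (Set.Finite.image _ (Finset.finite_toSet _)) hsub
  -- disjointness of the coset shells
  have hdisjT : ∀ i j, i < K → j < K → i ≠ j → Disjoint (T i) (T j) := by
    intro i i' hi hi' hne
    rw [Set.disjoint_left]
    intro z hzi hzi'
    obtain ⟨⟨w, hw, hzw⟩, _⟩ := (claimA i hi z).mp hzi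
    obtain ⟨⟨w', hw', hzw'⟩, _⟩ := (claimA i' hi' z).mp hzi'
    rw [hlatt] at hw hw'
    obtain ⟨Y, _, hY⟩ := hw
    obtain ⟨Y', _, hY'⟩ := hw'
    have e : g i + w + s = g i' + w' + s := by rw [← hzw, ← hzw']
    set j0 : Fin K := ⟨0, by omega⟩ with hj0
    have e0 : g i j0 + w j0 + s j0 = g i' j0 + w' j0 + s j0 := congrFun (congrArg WithLp.ofLp e) j0
    have hgi : g i j0 = (i : ℝ) / K := by
      rw [hg i j0, if_pos]
      show (0 : ℕ) < K - i
      omega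
    have hgi' : g i' j0 = (i' : ℝ) / K := by
      rw [hg i' j0, if_pos]
      show (0 : ℕ) < K - i'
      omega
    rw [hY j0, hY' j0, hgi, hgi'] at e0
    have hreal : (i : ℝ) + K * Y j0 = i' + K * Y' j0 := by
      field_simp at e0
      linarith
    have hint : (i : ℤ) + K * Y j0 = i' + K * Y' j0 := by exact_mod_cast hreal
    set m : ℤ := Y' j0 - Y j0 with hm
    have hdiff : (i : ℤ) - i' = K * m := by
      rw [hm]; linear_combination hint
    rcases lt_trichotomy m 0 with h | h | h
    · have h1 : m ≤ -1 := by omega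
      have h2 : (K : ℤ) * m ≤ (K : ℤ) * (-1) :=
        mul_le_mul_of_nonneg_left h1 (by exact_mod_cast Nat.zero_le K)
      have h3 : (i : ℤ) - i' ≤ -(K : ℤ) := by rw [hdiff]; linarith
      omega
    · rw [h, mul_zero] at hdiff
      omega
    · have h1 : 1 ≤ m := by omega
      have h2 : (K : ℤ) * 1 ≤ (K : ℤ) * m :=
        mul_le_mul_of_nonneg_left h1 (by exact_mod_cast Nat.zero_le K)
      have h3 : (K : ℤ) ≤ (i : ℤ) - i' := by rw [hdiff]; linarith
      omega
  -- assemble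
  have hTfin : ∀ i, i < K → (T i).Finite := fun i _ => hSfin.image _
  have hTcard : ∀ i, (T i).ncard = S.ncard :=
    fun i => Set.ncard_image_of_injective _ (hPinj i)
  obtain ⟨hDfin, hDcard⟩ := ncard_biUnion_range T K hTfin hdisjT
  rw [claimB]
  refine ⟨hDfin, hSfin, ?_⟩
  rw [hDcard]
  simp [hTcard, Finset.sum_const, Finset.card_range, mul_comm]
end

section
/- Fix a real ζ > 0 and a positive integer M, and let K = 2 and κ = 1. Let V_r(0) = {ζ·(2k − M + 1)/(2M) : k = 0,…,M−1}, and let μ_0 < μ_1 < ⋯ < μ_{M−1} be the M smallest SSD costs of centroid-0 pairs, i.e., μ_m = 2ζ²(m + 1/2)² for m = 0,…,M−1. Then the exact average cost of the optimal index assignment satisfies (1/M)·[ Σ_{λ ∈ V_r(0)} λ² + (1/2)·Σ_{m=0}^{M−1} μ_m ] = M²ζ²/3 − ζ²/(12M²). In particular, adding the central-quantizer term ζ²/(12M²) yields exactly M²ζ²/3. -/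
lemma sum_id_real (n : ℕ) : ∑ k ∈ Finset.range n, (k : ℝ) = n * (n - 1) / 2 := by
  induction n with
  | zero => simp
  | succ n ih => rw [Finset.sum_range_succ, ih]; push_cast; ring

lemma sum_sq_real (n : ℕ) :
    ∑ k ∈ Finset.range n, (k : ℝ) ^ 2 = n * (n - 1) * (2 * n - 1) / 6 := by
  induction n with
  | zero => simp
  | succ n ih => rw [Finset.sum_range_succ, ih]; push_cast; ring

/-- Exact average cost of the optimal two-description index assignment
(`K = 2`, `κ = 1`): with `V_r(0) = {ζ(2k − M + 1)/(2M) : k < M}` and the `M`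
smallest SSD costs `μ_m = 2ζ²(m + 1/2)²`, one has
`(1/M)·(Σ_{λ∈V_r(0)} λ² + (1/2)·Σ_{m<M} μ_m) = M²ζ²/3 − ζ²/(12M²)`; adding the
central-quantizer term `ζ²/(12M²)` yields exactly `M²ζ²/3`. -/
theorem two_description_exact_average_cost
    (ζ : ℝ) (hζ : 0 < ζ) (M : ℕ) (hM : 0 < M)
    (Vr0 : Finset ℝ)
    (hVr0 : Vr0 = (Finset.range M).image
        (fun k : ℕ => ζ * (2 * (k : ℝ) - M + 1) / (2 * M)))
    (μ : ℕ → ℝ) (hμ : ∀ m : ℕ, μ m = 2 * ζ ^ 2 * ((m : ℝ) + 1 / 2) ^ 2) :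
    (1 / (M : ℝ)) * ((∑ v ∈ Vr0, v ^ 2) + (1 / 2) * ∑ m ∈ Finset.range M, μ m)
        = (M : ℝ) ^ 2 * ζ ^ 2 / 3 - ζ ^ 2 / (12 * (M : ℝ) ^ 2) ∧
    (1 / (M : ℝ)) * ((∑ v ∈ Vr0, v ^ 2) + (1 / 2) * ∑ m ∈ Finset.range M, μ m)
        + ζ ^ 2 / (12 * (M : ℝ) ^ 2) = (M : ℝ) ^ 2 * ζ ^ 2 / 3 := by
  have hMR : (0 : ℝ) < (M : ℝ) := by exact_mod_cast hM
  have hMne : (M : ℝ) ≠ 0 := ne_of_gt hMR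
  have hζne : ζ ≠ 0 := ne_of_gt hζ
  -- sum over Vr0 as a sum over range M
  have hinj : ∀ x ∈ Finset.range M, ∀ y ∈ Finset.range M,
      ζ * (2 * (x : ℝ) - M + 1) / (2 * M) = ζ * (2 * (y : ℝ) - M + 1) / (2 * M)
      → x = y := by
    intro x _ y _ h
    field_simp at h
    have hxy : (x : ℝ) = y := by linarith
    exact_mod_cast hxy
  have h1 : (∑ v ∈ Vr0, v ^ 2)
      = ζ ^ 2 * ((M : ℝ) ^ 2 - 1) / (12 * M) := by
    rw [hVr0, Finset.sum_image hinj]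
    have hcong : ∀ k ∈ Finset.range M,
        (ζ * (2 * (k : ℝ) - M + 1) / (2 * M)) ^ 2
        = (ζ ^ 2 / M ^ 2) * (k : ℝ) ^ 2
          + (ζ ^ 2 * (1 - M) / M ^ 2) * (k : ℝ)
          + ζ ^ 2 * ((M : ℝ) - 1) ^ 2 / (4 * M ^ 2) := by
      intro k _
      field_simp
      ring
    rw [Finset.sum_congr rfl hcong, Finset.sum_add_distrib, Finset.sum_add_distrib,
      ← Finset.mul_sum, ← Finset.mul_sum, Finset.sum_const, Finset.card_range,
      sum_id_real, sum_sq_real]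
    field_simp
    have hinv : (M : ℝ) * (M : ℝ)⁻¹ = 1 := mul_inv_cancel₀ hMne
    linear_combination 36 * ζ ^ 2 * (1 - (M : ℝ)) ^ 2 * ((M : ℝ) * (M : ℝ)⁻¹ + 1) * hinv
  have h2 : (∑ m ∈ Finset.range M, μ m)
      = ζ ^ 2 * (M : ℝ) * (4 * (M : ℝ) ^ 2 - 1) / 6 := by
    have hcong : ∀ m ∈ Finset.range M,
        μ m = 2 * ζ ^ 2 * (m : ℝ) ^ 2 + 2 * ζ ^ 2 * (m : ℝ) + ζ ^ 2 / 2 := by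
      intro m _
      rw [hμ]
      ring
    rw [Finset.sum_congr rfl hcong, Finset.sum_add_distrib, Finset.sum_add_distrib,
      ← Finset.mul_sum, ← Finset.mul_sum, Finset.sum_const, Finset.card_range,
      sum_id_real, sum_sq_real]
    field_simp
    ring
  constructor
  · rw [h1, h2]; field_simp; ring
  · rw [h1, h2]; field_simp; ring
end

section
/- For a positive integer M, let P(M) = {0} ∪ {i(M−1) : i = 1,…,M−1} ∪ {(M−1)² + M} ∪ {(M−1)² + M + i(M+1) : i = 1,…,M−1} ⊂ ℤ. Then: (i) P(M) has exactly 2M elements; (ii) min P(M) = 0 and max P(M) = M(2M−1), so the spread max P(M) − min P(M) equals b(b−1)/2 with b = 2M, i.e., P(M) achieves the lower bound b(b−1)/2 on the spread of a quantization unit of bandwidth b; (iii) when the elements of P(M) are listed in increasing order, the consecutive differences are M−1 repeated M−1 times, then M once, then M+1 repeated M−1 times. -/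
/-- Properties of the fundamental pattern
`P(M) = {0} ∪ {i(M−1)}_{i=1}^{M−1} ∪ {(M−1)²+M} ∪ {(M−1)²+M+i(M+1)}_{i=1}^{M−1}`:
(i) it has exactly `2M` elements; (ii) its minimum is `0` and its maximum is
`M(2M−1)`, so its spread equals `b(b−1)/2` with `b = 2M`; (iii) listed in
increasing order, the consecutive differences are `M−1` (repeated `M−1` times),
then `M` once, then `M+1` (repeated `M−1` times). -/
theorem fundamental_pattern_properties
    (M : ℕ) (hM : 0 < M)
    (P : Finset ℤ)
    (hP : P = {(0 : ℤ)}
        ∪ (Finset.Icc 1 (M - 1)).image (fun i : ℕ => (i : ℤ) * ((M : ℤ) - 1))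
        ∪ {((M : ℤ) - 1) ^ 2 + M}
        ∪ (Finset.Icc 1 (M - 1)).image
            (fun i : ℕ => ((M : ℤ) - 1) ^ 2 + (M : ℤ) + (i : ℤ) * ((M : ℤ) + 1)))
    (l : List ℤ) (hl : l = P.sort (· ≤ ·)) :
    P.card = 2 * M ∧
    (0 : ℤ) ∈ P ∧ ((M : ℤ) * (2 * (M : ℤ) - 1)) ∈ P ∧
    (∀ p ∈ P, (0 : ℤ) ≤ p ∧ p ≤ (M : ℤ) * (2 * (M : ℤ) - 1)) ∧
    (M : ℤ) * (2 * (M : ℤ) - 1) - 0 = (2 * (M : ℤ)) * (2 * (M : ℤ) - 1) / 2 ∧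
    l.length = 2 * M ∧
    (∀ j : ℕ, j + 1 < 2 * M →
      l[j + 1]! - l[j]! =
        if j < M - 1 then (M : ℤ) - 1 else if j = M - 1 then (M : ℤ) else (M : ℤ) + 1) := by
  set f : ℕ → ℤ := fun j =>
    if j < M then (j : ℤ) * ((M : ℤ) - 1)
    else ((M : ℤ) - 1) ^ 2 + (M : ℤ) + ((j : ℤ) - (M : ℤ)) * ((M : ℤ) + 1) with hf
  have hmono : StrictMono f := by
    apply strictMono_nat_of_lt_succ
    intro j
    simp only [hf]
    rcases lt_trichotomy (j + 1) M with h | h | h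
    · rw [if_pos h, if_pos (show j < M by omega)]
      have h2 : (1 : ℤ) ≤ (M : ℤ) - 1 := by
        have : (2 : ℤ) ≤ (M : ℤ) := by exact_mod_cast (by omega : 2 ≤ M)
        omega
      push_cast
      nlinarith
    · rw [if_neg (show ¬ j + 1 < M by omega), if_pos (show j < M by omega)]
      have hj : (j : ℤ) = (M : ℤ) - 1 := by
        have : j = M - 1 := by omega
        subst this; push_cast [hM]; ring
      push_cast
      rw [hj]
      have : (0 : ℤ) < (M : ℤ) := by exact_mod_cast hM
      nlinarith
    · rw [if_neg (show ¬ j + 1 < M by omega), if_neg (show ¬ j < M by omega)]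
      have : (0 : ℤ) < (M : ℤ) := by exact_mod_cast hM
      push_cast
      nlinarith
  have hf0 : f 0 = 0 := by simp [hf, hM]
  have hPf : P = (Finset.range (2 * M)).image f := by
    rw [hP]
    ext x
    simp only [Finset.mem_union, Finset.mem_image, Finset.mem_singleton, Finset.mem_Icc,
      Finset.mem_range]
    constructor
    · rintro (((h | ⟨i, ⟨hi1, hi2⟩, rfl⟩) | h) | ⟨i, ⟨hi1, hi2⟩, rfl⟩)
      · exact ⟨0, by omega, by rw [hf0, h]⟩
      · exact ⟨i, by omega, by simp [hf, show i < M by omega]⟩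
      · refine ⟨M, by omega, ?_⟩
        simp [hf, h.symm]
      · refine ⟨M + i, by omega, ?_⟩
        simp only [hf, if_neg (show ¬ M + i < M by omega)]
        push_cast; ring
    · rintro ⟨j, hj, rfl⟩
      by_cases h1 : j < M
      · rcases Nat.eq_zero_or_pos j with rfl | hj0
        · left; left; left; exact hf0
        · left; left; right
          exact ⟨j, ⟨by omega, by omega⟩, by simp [hf, h1]⟩
      · rcases eq_or_lt_of_le (not_lt.mp h1) with rfl | hj1
        · left; right; simp [hf]
        · right
          refine ⟨j - M, ⟨by omega, by omega⟩, ?_⟩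
          simp only [hf, if_neg h1]
          push_cast [Nat.le_of_lt hj1]
          ring
  have hL : l = (List.range (2 * M)).map f := by
    rw [hl]
    refine (fun hp h1 h2 => List.Perm.eq_of_pairwise' h1 h2 hp)
      (List.perm_of_nodup_nodup_toFinset_eq (Finset.sort_nodup _ _)
        ((List.nodup_range (n := _)).map hmono.injective) ?_)
      (Finset.pairwise_sort _ _) ?_
    · rw [Finset.sort_toFinset, hPf]
      ext x
      simp
    · exact List.pairwise_map.mpr
        ((List.pairwise_lt_range (n := _)).imp fun h => le_of_lt (hmono h))
  have hlen : l.length = 2 * M := by simp [hL]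
  have hget : ∀ j : ℕ, j < 2 * M → l[j]! = f j := by
    intro j hj
    have h : j < l.length := by omega
    rw [getElem!_pos l j h]
    simp [hL]
  have hftop : f (2 * M - 1) = (M : ℤ) * (2 * (M : ℤ) - 1) := by
    simp only [hf, if_neg (show ¬ 2 * M - 1 < M by omega)]
    have : ((2 * M - 1 : ℕ) : ℤ) = 2 * (M : ℤ) - 1 := by push_cast [hM]; omega
    rw [this]; ring
  refine ⟨?_, ?_, ?_, ?_, ?_, hlen, ?_⟩
  · rw [hPf, Finset.card_image_of_injective _ hmono.injective, Finset.card_range]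
  · rw [hPf]
    exact Finset.mem_image.mpr ⟨0, by simp [hM], hf0⟩
  · rw [hPf]
    exact Finset.mem_image.mpr ⟨2 * M - 1, by simp; omega, hftop⟩
  · rw [hPf]
    rintro p hp
    obtain ⟨j, hj, rfl⟩ := Finset.mem_image.mp hp
    rw [Finset.mem_range] at hj
    constructor
    · rw [← hf0]; exact hmono.monotone (Nat.zero_le _)
    · rw [← hftop]; exact hmono.monotone (by omega)
  · rw [show (2 * (M:ℤ)) * (2 * (M:ℤ) - 1) = 2 * ((M:ℤ) * (2 * (M:ℤ) - 1)) by ring,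
      Int.mul_ediv_cancel_left _ (by norm_num)]
    ring
  · intro j hj
    rw [hget _ hj, hget _ (by omega)]
    simp only [hf]
    by_cases h1 : j < M - 1
    · rw [if_pos (show j + 1 < M by omega), if_pos (show j < M by omega), if_pos h1]
      push_cast; ring
    · by_cases h2 : j = M - 1
      · subst h2
        rw [if_neg (show ¬ M - 1 + 1 < M by omega), if_pos (show M - 1 < M by omega),
          if_neg h1, if_pos rfl]
        have e1 : ((M - 1 + 1 : ℕ) : ℤ) = (M : ℤ) := by push_cast [hM]; omega
        have e2 : ((M - 1 : ℕ) : ℤ) = (M : ℤ) - 1 := by push_cast [hM]; omega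
        rw [e1, e2]; ring
      · rw [if_neg (show ¬ j + 1 < M by omega), if_neg (show ¬ j < M by omega),
          if_neg h1, if_neg h2]
        push_cast; ring
end

section
/- Fix an integer K ≥ 2, a real ζ > 0, and a positive integer M. Let A_c = {(ζ/M)·y + (ζ/(2M))·((M+1) mod 2) : y ∈ ℤ} and, for i ∈ {0,…,K−1}, let A_i = {Kζ·x + (2i−K+1)ζ/2 : x ∈ ℤ}. Then for every point λ ∈ A_i: (i) no point of A_c equals an endpoint λ ± Kζ/2 of the Voronoi cell of λ in A_i; and (ii) the open interval (λ − Kζ/2, λ + Kζ/2) contains exactly K·M points of A_c. That is, each side quantizer cell contains exactly N = KM central quantizer points, where N is the redundancy index. -/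
/-- Each side quantizer cell contains exactly `N = K·M` central quantizer points:
for any point `λ` of side quantizer `A_i`, no central point coincides with either
endpoint `λ ± Kζ/2` of its Voronoi cell, and the open interval
`(λ − Kζ/2, λ + Kζ/2)` contains exactly `K·M` points of `A_c`. -/
theorem side_cell_contains_KM_central_points
    (K : ℕ) (hK : 2 ≤ K) (ζ : ℝ) (hζ : 0 < ζ) (M : ℕ) (hM : 0 < M)
    (Ac : Set ℝ)
    (hAc : Ac = {v : ℝ | ∃ y : ℤ,
        v = (ζ / M) * (y : ℝ) + (ζ / (2 * M)) * (((M + 1) % 2 : ℕ) : ℝ)})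
    (i : ℕ) (hi : i < K)
    (lam : ℝ)
    (hlam : ∃ x : ℤ, lam = (K : ℝ) * ζ * (x : ℝ) + (2 * (i : ℝ) - K + 1) * ζ / 2) :
    (∀ c ∈ Ac, c ≠ lam + (K : ℝ) * ζ / 2 ∧ c ≠ lam - (K : ℝ) * ζ / 2) ∧
    (Ac ∩ Set.Ioo (lam - (K : ℝ) * ζ / 2) (lam + (K : ℝ) * ζ / 2)).Finite ∧
    (Ac ∩ Set.Ioo (lam - (K : ℝ) * ζ / 2) (lam + (K : ℝ) * ζ / 2)).ncard = K * M := by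
  obtain ⟨x, hx⟩ := hlam
  set E : ℤ := (((M + 1) % 2 : ℕ) : ℤ) with hEdef
  set m : ℤ := K * x + i - K with hmdef
  set L : ℤ := M * (2 * m + 1) with hLdef
  have hM0 : (M : ℝ) ≠ 0 := Nat.cast_ne_zero.mpr hM.ne'
  have hpos : (0:ℝ) < ζ / (2 * M) := by positivity
  -- parity : L - E + 1 is even
  have hdvd : ∃ j : ℤ, L - E + 1 = 2 * j := by
    rcases Nat.even_or_odd M with ⟨k, hk⟩ | ⟨k, hk⟩
    · have hE : E = 1 := by omega
      refine ⟨k * (2 * m + 1), ?_⟩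
      have hMk : (M : ℤ) = 2 * k := by omega
      rw [hLdef, hMk, hE]; ring
    · have hE : E = 0 := by omega
      refine ⟨(2 * k + 1) * m + k + 1, ?_⟩
      have hMk : (M : ℤ) = 2 * k + 1 := by omega
      rw [hLdef, hMk, hE]; ring
  obtain ⟨j, hj⟩ := hdvd
  have ha : lam - (K : ℝ) * ζ / 2 = ζ / (2 * M) * ((L : ℤ) : ℝ) := by
    rw [hx, hLdef, hmdef]; push_cast; field_simp; ring
  set N : ℤ := ((K * M : ℕ) : ℤ) with hNdef
  have hb : lam + (K : ℝ) * ζ / 2 = ζ / (2 * M) * (((L + 2 * N : ℤ)) : ℝ) := by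
    rw [hx, hLdef, hmdef, hNdef]; push_cast; field_simp; ring
  have hcform : ∀ y : ℤ, (ζ / M) * (y : ℝ) + (ζ / (2 * M)) * (((M + 1) % 2 : ℕ) : ℝ)
      = ζ / (2 * M) * ((2 * y + E : ℤ) : ℝ) := by
    intro y
    have hEc : ((E : ℤ) : ℝ) = (((M + 1) % 2 : ℕ) : ℝ) := by
      rw [hEdef]; exact Int.cast_natCast _
    rw [show ((2 * y + E : ℤ) : ℝ) = 2 * (y : ℝ) + ((E : ℤ) : ℝ) by push_cast; ring, hEc]
    field_simp
  have hmem : ∀ v : ℝ, v ∈ Ac ↔ ∃ y : ℤ, v = ζ / (2 * M) * ((2 * y + E : ℤ) : ℝ) := by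
    intro v; rw [hAc]; constructor
    · rintro ⟨y, rfl⟩; exact ⟨y, hcform y⟩
    · rintro ⟨y, rfl⟩; exact ⟨y, (hcform y).symm⟩
  have hceq : ∀ p q : ℤ, ζ / (2 * M) * ((p : ℤ) : ℝ) = ζ / (2 * M) * ((q : ℤ) : ℝ) ↔ p = q := by
    intro p q
    constructor
    · intro h
      exact_mod_cast mul_left_cancel₀ hpos.ne' h
    · rintro rfl; rfl
  have hclt : ∀ p q : ℤ, ζ / (2 * M) * ((p : ℤ) : ℝ) < ζ / (2 * M) * ((q : ℤ) : ℝ) ↔ p < q := by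
    intro p q
    rw [mul_lt_mul_iff_right₀ hpos]
    exact Int.cast_lt
  refine ⟨?_, ?_, ?_⟩
  · -- endpoints are never central points
    intro c hc
    obtain ⟨y, rfl⟩ := (hmem c).mp hc
    constructor
    · rw [hb, Ne, hceq]; omega
    · rw [ha, Ne, hceq]; omega
  · -- finiteness
    have hsub : Ac ∩ Set.Ioo (lam - (K : ℝ) * ζ / 2) (lam + (K : ℝ) * ζ / 2) ⊆
        (fun y : ℤ => ζ / (2 * M) * ((2 * y + E : ℤ) : ℝ)) '' ↑(Finset.Ico j (j + N)) := by
      rintro v ⟨hv, hv1, hv2⟩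
      obtain ⟨y, rfl⟩ := (hmem v).mp hv
      rw [ha, hclt] at hv1
      rw [hb, hclt] at hv2
      exact ⟨y, by simp only [Finset.coe_Ico, Set.mem_Ico]; omega, rfl⟩
    exact Set.Finite.subset (Set.Finite.image _ (Finset.finite_toSet _)) hsub
  · -- the count
    have hseq : Ac ∩ Set.Ioo (lam - (K : ℝ) * ζ / 2) (lam + (K : ℝ) * ζ / 2) =
        (fun y : ℤ => ζ / (2 * M) * ((2 * y + E : ℤ) : ℝ)) '' ↑(Finset.Ico j (j + N)) := by
      ext v
      constructor
      · rintro ⟨hv, hv1, hv2⟩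
        obtain ⟨y, rfl⟩ := (hmem v).mp hv
        rw [ha, hclt] at hv1
        rw [hb, hclt] at hv2
        exact ⟨y, by simp only [Finset.coe_Ico, Set.mem_Ico]; omega, rfl⟩
      · rintro ⟨y, hy, rfl⟩
        simp only [Finset.coe_Ico, Set.mem_Ico] at hy
        refine ⟨(hmem _).mpr ⟨y, rfl⟩, ?_, ?_⟩
        · rw [ha, hclt]; omega
        · rw [hb, hclt]; omega
    rw [hseq, Set.ncard_image_of_injective _ ?_, Set.ncard_coe_finset, Int.card_Ico]
    · omega
    · intro p q hpq
      have := (hceq (2 * p + E) (2 * q + E)).mp hpq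
      omega
end
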